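/- arXiv:0704.2763 — 4 statements merged into one kernel-verified Lean document; each statement's English description precedes it below -/
import Mathlib

section
/- Let K be a compact abelian Lie group and let K₁ denote the connected component of the identity element of K. Then there is a bicontinuous group isomorphism K₁ × π₀(K) ≅ K, where π₀(K) is the (finite) group of connected components of K. -/
/-!
STATEMENT 2 (Lemma 1.3): Let `K` be a compact abelian Lie group and let `K₁` denote
the connected component of the identity element of `K`. Then there is a bicontinuous
group isomorphism `K₁ × π₀(K) ≅ K`, where `π₀(K) = K / K₁` is the group of connected
components of `K`.
-/

open scoped Manifold

open Filter Set Topology CategoryTheory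

/-- The `n`-th power map on a Lie group maps neighbourhoods of `1` onto
neighbourhoods of `1` when `n > 0` (inverse function theorem in charts). -/
theorem aux_pow_map_nhds_one {EK : Type*} [NormedAddCommGroup EK] [NormedSpace ℝ EK] [FiniteDimensional ℝ EK]
    {K : Type*} [TopologicalSpace K] [ChartedSpace EK K] [CommGroup K]
    [IsTopologicalGroup K] [LieGroup (𝓘(ℝ, EK)) (⊤ : ℕ∞) K] (n : ℕ) (hn : 0 < n) :
    Filter.map (fun x : K => x ^ n) (𝓝 1) = 𝓝 (1 : K) := by
  set I : ModelWithCorners ℝ EK EK := 𝓘(ℝ, EK)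
  set φ : PartialEquiv K EK := extChartAt I (1 : K) with hφ
  set a : EK := φ 1 with ha
  have h1source : (1 : K) ∈ φ.source := mem_extChartAt_source (1 : K)
  have hsymm_a : φ.symm a = 1 := φ.left_inv h1source
  have htarget : φ.target ∈ 𝓝 a := extChartAt_target_mem_nhds (1 : K)
  have hsource_open : IsOpen φ.source := isOpen_extChartAt_source (1 : K)
  have hsymm_cont : ContinuousAt φ.symm a := continuousAt_extChartAt_symm (1 : K)
  -- the multiplication in charts
  set μ : EK × EK → EK := fun p => φ (φ.symm p.1 * φ.symm p.2) with hμdef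
  have hμsmooth : ContDiffAt ℝ (⊤ : ℕ∞) μ (a, a) := by
    have hmul : ContMDiffAt (I.prod I) I (⊤ : ℕ∞) (fun p : K × K => p.1 * p.2) (1, 1) :=
      (contMDiff_mul I (⊤ : ℕ∞) (G := K)).contMDiffAt
    rw [contMDiffAt_iff] at hmul
    have h2 := hmul.2
    rw [extChartAt_prod] at h2
    simp only [mul_one] at h2
    have hr : range (I.prod I) = univ := ModelWithCorners.range_eq_univ (I.prod I)
    rw [hr, contDiffWithinAt_univ] at h2
    have hfun : (↑(extChartAt I (1 : K)) ∘ (fun p : K × K => p.1 * p.2) ∘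
        ↑((extChartAt I (1 : K)).prod (extChartAt I (1 : K))).symm) = μ := rfl
    rw [hfun] at h2
    exact h2
  have hμdiff : DifferentiableAt ℝ μ (a, a) := hμsmooth.differentiableAt (by simp)
  set L : EK × EK →L[ℝ] EK := fderiv ℝ μ (a, a) with hL
  have hμderiv : HasFDerivAt μ L (a, a) := hμdiff.hasFDerivAt
  -- L (w, 0) = w
  have hL1 : ∀ w : EK, L (w, 0) = w := by
    intro w
    have hev : (fun u => μ (u, a)) =ᶠ[𝓝 a] id := by
      filter_upwards [htarget] with u hu
      simp only [μ, hsymm_a, mul_one, id_eq]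
      exact φ.right_inv hu
    have hinl : HasFDerivAt (fun u : EK => (u, a))
        ((ContinuousLinearMap.id ℝ EK).prod 0) a :=
      (hasFDerivAt_id a).prodMk (hasFDerivAt_const a a)
    have hcomp : HasFDerivAt (fun u => μ (u, a))
        (L.comp ((ContinuousLinearMap.id ℝ EK).prod 0)) a :=
      HasFDerivAt.comp (f := fun u : EK => (u, a)) a hμderiv hinl
    have hid : HasFDerivAt (id : EK → EK)
        (L.comp ((ContinuousLinearMap.id ℝ EK).prod 0)) a :=
      hcomp.congr_of_eventuallyEq hev.symm
    have := hid.unique (hasFDerivAt_id a)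
    have h := congrArg (fun (T : EK →L[ℝ] EK) => T w) this
    simpa using h
  have hL2 : ∀ w : EK, L (0, w) = w := by
    intro w
    have hev : (fun u => μ (a, u)) =ᶠ[𝓝 a] id := by
      filter_upwards [htarget] with u hu
      simp only [μ, hsymm_a, one_mul, id_eq]
      exact φ.right_inv hu
    have hinr : HasFDerivAt (fun u : EK => ((a : EK), u))
        ((0 : EK →L[ℝ] EK).prod (ContinuousLinearMap.id ℝ EK)) a :=
      (hasFDerivAt_const a a).prodMk (hasFDerivAt_id a)
    have hcomp : HasFDerivAt (fun u => μ (a, u))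
        (L.comp ((0 : EK →L[ℝ] EK).prod (ContinuousLinearMap.id ℝ EK))) a :=
      HasFDerivAt.comp (f := fun u : EK => ((a : EK), u)) a hμderiv hinr
    have hid : HasFDerivAt (id : EK → EK)
        (L.comp ((0 : EK →L[ℝ] EK).prod (ContinuousLinearMap.id ℝ EK))) a :=
      hcomp.congr_of_eventuallyEq hev.symm
    have := hid.unique (hasFDerivAt_id a)
    have h := congrArg (fun (T : EK →L[ℝ] EK) => T w) this
    simpa using h
  have hLadd : ∀ u v : EK, L (u, v) = u + v := by
    intro u v
    have : ((u, v) : EK × EK) = (u, 0) + (0, v) := by simp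
    rw [this, map_add, hL1, hL2]
  -- derivative of the power maps in charts
  have key : ∀ k : ℕ, HasFDerivAt (fun u => φ (φ.symm u ^ k))
      ((k : ℝ) • ContinuousLinearMap.id ℝ EK) a := by
    intro k
    induction k with
    | zero =>
      simp only [pow_zero, Nat.cast_zero, zero_smul]
      exact hasFDerivAt_const (φ 1) a
    | succ k ih =>
      have hcontk : ContinuousAt (fun u => φ.symm u ^ k) a := by
        exact (continuous_pow k).continuousAt.comp hsymm_cont
      have hmemk : (fun u => φ.symm u ^ k) a ∈ φ.source := by
        simp [hsymm_a, h1source]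
      have hev : (fun u => μ (φ (φ.symm u ^ k), u)) =ᶠ[𝓝 a]
          (fun u => φ (φ.symm u ^ (k + 1))) := by
        filter_upwards [htarget, hcontk.preimage_mem_nhds (hsource_open.mem_nhds hmemk)]
          with u hu hku
        have h1 : φ.symm (φ (φ.symm u ^ k)) = φ.symm u ^ k := φ.left_inv hku
        show φ (φ.symm (φ (φ.symm u ^ k)) * φ.symm u) = φ (φ.symm u ^ (k + 1))
        rw [h1, ← pow_succ]
      have hval : (fun u => (φ (φ.symm u ^ k), u)) a = (a, a) := by
        simp [hsymm_a, ← ha]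
      have hinner : HasFDerivAt (fun u => (φ (φ.symm u ^ k), u))
          (((k : ℝ) • ContinuousLinearMap.id ℝ EK).prod (ContinuousLinearMap.id ℝ EK)) a :=
        ih.prodMk (hasFDerivAt_id a)
      have hcomp : HasFDerivAt (fun u => μ (φ (φ.symm u ^ k), u))
          (L.comp (((k : ℝ) • ContinuousLinearMap.id ℝ EK).prod
            (ContinuousLinearMap.id ℝ EK))) a := by
        have := HasFDerivAt.comp (f := fun u : EK => (φ (φ.symm u ^ k), u))
          (g := μ) a (hval ▸ hμderiv) hinner
        exact this
      have hDeq : L.comp (((k : ℝ) • ContinuousLinearMap.id ℝ EK).prod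
          (ContinuousLinearMap.id ℝ EK)) = ((k : ℝ) + 1) • ContinuousLinearMap.id ℝ EK := by
        ext w
        simp only [ContinuousLinearMap.coe_comp', Function.comp_apply,
          ContinuousLinearMap.prod_apply, ContinuousLinearMap.coe_smul',
          Pi.smul_apply, ContinuousLinearMap.coe_id', id_eq]
        rw [hLadd]
        module
      have := hcomp.congr_of_eventuallyEq hev.symm
      rw [hDeq] at this
      convert this using 2
      push_cast
      ring
  -- the chart representation of the power map
  set g : EK → EK := fun u => φ (φ.symm u ^ n) with hg
  have hga : g a = a := by simp [g, hsymm_a, ← ha]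
  have hgsmooth : ContDiffAt ℝ (⊤ : ℕ∞) g a := by
    have hpow : ContMDiffAt I I (⊤ : ℕ∞) (fun x : K => x ^ n) (1 : K) :=
      (contMDiff_pow n).contMDiffAt
    rw [contMDiffAt_iff] at hpow
    have h2 := hpow.2
    simp only [one_pow] at h2
    have hr : range I = univ := ModelWithCorners.range_eq_univ I
    rw [hr, contDiffWithinAt_univ] at h2
    have hfun : (↑(extChartAt I (1 : K)) ∘ (fun x : K => x ^ n) ∘
        ↑(extChartAt I (1 : K)).symm) = g := rfl
    rw [hfun] at h2
    exact h2
  -- the derivative is invertible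
  have hne : (n : ℝ) ≠ 0 := by exact_mod_cast hn.ne'
  set D : EK ≃L[ℝ] EK :=
    (LinearEquiv.smulOfNeZero ℝ EK (n : ℝ) hne).toContinuousLinearEquiv with hD
  have hDcoe : (D : EK →L[ℝ] EK) = (n : ℝ) • ContinuousLinearMap.id ℝ EK := by
    ext w
    simp only [D, LinearEquiv.coe_toContinuousLinearEquiv', LinearEquiv.smulOfNeZero,
      LinearEquiv.smulOfUnit, DistribMulAction.toLinearEquiv, DistribMulAction.toLinearMap,
      LinearEquiv.coe_mk, LinearMap.coe_mk, AddHom.coe_mk, ContinuousLinearMap.coe_smul',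
      Pi.smul_apply, ContinuousLinearMap.coe_id', id_eq]
    norm_num
  have hstrict : HasStrictFDerivAt g (D : EK →L[ℝ] EK) a := by
    rw [hDcoe]
    exact hgsmooth.hasStrictFDerivAt' (key n) (by simp)
  have hmapg : Filter.map g (𝓝 a) = 𝓝 a := by
    have := hstrict.map_nhds_eq_of_equiv
    rwa [hga] at this
  -- transfer back to the group
  have hφmap : Filter.map φ (𝓝 (1 : K)) = 𝓝 a :=
    map_extChartAt_nhds_of_boundaryless (1 : K)
  have hφsymm_map : Filter.map φ.symm (𝓝 a) = 𝓝 (1 : K) := by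
    have := map_extChartAt_symm_nhdsWithin_range (I := I) (1 : K)
    rwa [ModelWithCorners.range_eq_univ, nhdsWithin_univ] at this
  have hfcont : ContinuousAt (fun x : K => x ^ n) (1 : K) :=
    (continuous_pow n).continuousAt
  have hev2 : (fun x : K => x ^ n) =ᶠ[𝓝 (1 : K)] fun x => φ.symm (g (φ x)) := by
    filter_upwards [hsource_open.mem_nhds h1source,
      hfcont.preimage_mem_nhds (hsource_open.mem_nhds (by simpa using h1source))]
      with x hx hfx
    simp only [g]
    rw [φ.left_inv hx, φ.left_inv hfx]
  calc Filter.map (fun x : K => x ^ n) (𝓝 (1 : K))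
      = Filter.map (fun x => φ.symm (g (φ x))) (𝓝 (1 : K)) := Filter.map_congr hev2
    _ = Filter.map φ.symm (Filter.map g (Filter.map φ (𝓝 (1 : K)))) := by
        rw [Filter.map_map, Filter.map_map]; rfl
    _ = 𝓝 (1 : K) := by rw [hφmap, hmapg, hφsymm_map]

/-- The identity component of a Lie group is open. -/
theorem aux_isOpen_connectedComponentOfOne {EK : Type*} [NormedAddCommGroup EK] [NormedSpace ℝ EK] [FiniteDimensional ℝ EK]
    {K : Type*} [TopologicalSpace K] [ChartedSpace EK K] [CommGroup K]
    [IsTopologicalGroup K] [LieGroup (𝓘(ℝ, EK)) (⊤ : ℕ∞) K] :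
    IsOpen ((Subgroup.connectedComponentOfOne K : Subgroup K) : Set K) := by
  have : LocallyConnectedSpace EK := by infer_instance
  have : LocallyConnectedSpace K := ChartedSpace.locallyConnectedSpace EK K
  exact isOpen_connectedComponent

/-- The identity component of a compact abelian Lie group is a divisible group:
every element has an `n`-th root for every `n > 0`. -/
theorem aux_divisible {EK : Type*} [NormedAddCommGroup EK] [NormedSpace ℝ EK] [FiniteDimensional ℝ EK]
    {K : Type*} [TopologicalSpace K] [ChartedSpace EK K] [CommGroup K]
    [IsTopologicalGroup K] [LieGroup (𝓘(ℝ, EK)) (⊤ : ℕ∞) K] (n : ℕ) (hn : 0 < n) :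
    Function.Surjective
      (fun x : (Subgroup.connectedComponentOfOne K) => x ^ n) := by
  set Γ : Subgroup K := Subgroup.connectedComponentOfOne K with hΓ
  have hΓopen : IsOpen (Γ : Set K) := aux_isOpen_connectedComponentOfOne (EK := EK)
  -- the image subgroup
  set T : Subgroup K := Subgroup.map (powMonoidHom n : K →* K) Γ with hT
  have hTsub : (T : Set K) ⊆ (Γ : Set K) := by
    rintro x ⟨y, hy, rfl⟩
    exact Γ.pow_mem hy n
  have hTnhds : (T : Set K) ∈ 𝓝 (1 : K) := by
    rw [← aux_pow_map_nhds_one (EK := EK) (K := K) n hn, Filter.mem_map]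
    refine Filter.mem_of_superset (hΓopen.mem_nhds Γ.one_mem) ?_
    intro y hy
    exact ⟨y, hy, rfl⟩
  have hTopen : IsOpen (T : Set K) := T.isOpen_of_mem_nhds hTnhds
  have hTclosed : IsClosed (T : Set K) := T.isClosed_of_isOpen hTopen
  have hconn : connectedComponent (1 : K) ⊆ (T : Set K) :=
    IsClopen.connectedComponent_subset ⟨hTclosed, hTopen⟩ T.one_mem
  intro y
  have hy : (y : K) ∈ connectedComponent (1 : K) := y.2
  obtain ⟨x, hxΓ, hxy⟩ := hconn hy
  exact ⟨⟨x, hxΓ⟩, Subtype.ext hxy⟩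

theorem aux_retraction {K : Type*} [CommGroup K] (Γ : Subgroup K)
    [DivisibleBy (Additive Γ) ℤ] :
    ∃ r : K →* Γ, ∀ h : Γ, r (h : K) = h := by
  classical
  haveI : CategoryTheory.Injective (AddCommGrpCat.of (Additive Γ)) :=
    AddCommGrpCat.injective_of_divisible _
  let A : AddCommGrpCat := AddCommGrpCat.of (Additive Γ)
  let B : AddCommGrpCat := AddCommGrpCat.of (Additive K)
  let ι : A ⟶ B := AddCommGrpCat.ofHom (MonoidHom.toAdditive Γ.subtype)
  haveI : CategoryTheory.Mono ι := by
    rw [AddCommGrpCat.mono_iff_injective]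
    intro a b hab
    have : (Γ.subtype a.toMul : K) = Γ.subtype b.toMul := hab
    exact Subtype.ext this
  let r' : B ⟶ A := CategoryTheory.Injective.factorThru (𝟙 A) ι
  have hfac : ι ≫ r' = 𝟙 A := CategoryTheory.Injective.comp_factorThru (𝟙 A) ι
  refine ⟨MonoidHom.toAdditive.symm r'.hom, fun h => ?_⟩
  have := congrArg (fun f : A ⟶ A => f (Additive.ofMul h)) hfac
  exact this

theorem compact_abelian_lie_group_splits_identity_component
    {EK : Type*} [NormedAddCommGroup EK] [NormedSpace ℝ EK] [FiniteDimensional ℝ EK]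
    {K : Type*} [TopologicalSpace K] [ChartedSpace EK K] [CommGroup K]
    [IsTopologicalGroup K] [LieGroup (𝓘(ℝ, EK)) (⊤ : ℕ∞) K] [CompactSpace K] :
    ∃ e : (Subgroup.connectedComponentOfOne K × (K ⧸ Subgroup.connectedComponentOfOne K)) ≃* K,
      Continuous e ∧ Continuous e.symm := by
  classical
  set Γ : Subgroup K := Subgroup.connectedComponentOfOne K with hΓdef
  have hΓopen : IsOpen (Γ : Set K) := aux_isOpen_connectedComponentOfOne (EK := EK)
  haveI : DiscreteTopology (K ⧸ Γ) := QuotientGroup.discreteTopology hΓopen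
  -- the identity component is divisible
  haveI hdivN : DivisibleBy (Additive Γ) ℕ := by
    refine divisibleByOfSMulRightSurj _ _ (fun {n} hn y => ?_)
    obtain ⟨x, hx⟩ := aux_divisible (EK := EK) (K := K) n (Nat.pos_of_ne_zero hn) y.toMul
    exact ⟨Additive.ofMul x, by simpa using congrArg Additive.ofMul hx⟩
  haveI : DivisibleBy (Additive Γ) ℤ := AddGroup.divisibleByIntOfDivisibleByNat _
  obtain ⟨r, hr⟩ := aux_retraction Γ
  -- the homomorphism `ψ x = x * (r x)⁻¹` vanishes on `Γ`
  set ψ : K →* K :=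
    { toFun := fun x => x * ((r x : K))⁻¹
      map_one' := by simp
      map_mul' := fun x y => by
        simp only [map_mul, Subgroup.coe_mul, mul_inv]
        exact (mul_mul_mul_comm x ((r x : K))⁻¹ y ((r y : K))⁻¹).symm } with hψdef
  have hψΓ : ∀ h ∈ Γ, ψ h = 1 := by
    intro h hh
    have : r h = ⟨h, hh⟩ := hr ⟨h, hh⟩
    simp [hψdef, this]
  -- the section `s : K ⧸ Γ → K`
  set s : K ⧸ Γ →* K := QuotientGroup.lift Γ ψ hψΓ with hsdef
  have hs_mk : ∀ x : K, s (QuotientGroup.mk x) = x * ((r x : K))⁻¹ := fun x => rfl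
  have hmk_s : ∀ q : K ⧸ Γ, QuotientGroup.mk (s q) = q := by
    intro q
    induction q using QuotientGroup.induction_on with
    | H x =>
      rw [hs_mk]
      rw [QuotientGroup.eq]
      have : (x * ((r x : K))⁻¹)⁻¹ * x = (r x : K) := by
        rw [mul_inv_rev, inv_inv, mul_assoc, inv_mul_cancel, mul_one]
      rw [this]
      exact (r x).2
  -- the forward and backward maps
  set F : Γ × (K ⧸ Γ) → K := fun p => (p.1 : K) * s p.2 with hFdef
  have hGmem : ∀ x : K, x * (s (QuotientGroup.mk x))⁻¹ ∈ Γ := by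
    intro x
    rw [hs_mk]
    have : x * (x * ((r x : K))⁻¹)⁻¹ = (r x : K) := by
      rw [mul_inv_rev, inv_inv, mul_comm ((r x : K)) x⁻¹, mul_inv_cancel_left]
    rw [this]
    exact (r x).2
  set G : K → Γ × (K ⧸ Γ) :=
    fun x => (⟨x * (s (QuotientGroup.mk x))⁻¹, hGmem x⟩, QuotientGroup.mk x) with hGdef
  have hmkF : ∀ p : Γ × (K ⧸ Γ), QuotientGroup.mk (F p) = p.2 := by
    rintro ⟨h, q⟩
    show QuotientGroup.mk ((h : K) * s q) = q
    rw [QuotientGroup.mk_mul, hmk_s]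
    have : (QuotientGroup.mk (h : K) : K ⧸ Γ) = 1 := (QuotientGroup.eq_one_iff _).2 h.2
    rw [this, one_mul]
  have hleft : Function.LeftInverse G F := by
    rintro ⟨h, q⟩
    have h2 : QuotientGroup.mk (F (h, q)) = q := hmkF (h, q)
    refine Prod.ext (Subtype.ext ?_) h2
    show F (h, q) * (s (QuotientGroup.mk (F (h, q))))⁻¹ = (h : K)
    rw [h2]
    show (h : K) * s q * (s q)⁻¹ = (h : K)
    exact mul_inv_cancel_right _ _
  have hright : Function.RightInverse G F := by
    intro x
    show (x * (s (QuotientGroup.mk x))⁻¹) * s (QuotientGroup.mk x) = x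
    exact inv_mul_cancel_right _ _
  refine ⟨{ toFun := F, invFun := G, left_inv := hleft, right_inv := hright,
            map_mul' := ?_ }, ?_, ?_⟩
  · rintro ⟨h₁, q₁⟩ ⟨h₂, q₂⟩
    show ((h₁ * h₂ : Γ) : K) * s (q₁ * q₂) = ((h₁ : K) * s q₁) * ((h₂ : K) * s q₂)
    rw [Subgroup.coe_mul, map_mul]
    exact mul_mul_mul_comm _ _ _ _
  · -- continuity of `F`
    exact ((continuous_subtype_val.comp continuous_fst).mul
      (continuous_of_discreteTopology.comp continuous_snd))
  · -- continuity of `G`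
    refine Continuous.prodMk (Continuous.subtype_mk ?_ _) QuotientGroup.continuous_mk
    exact continuous_id.mul
      ((continuous_of_discreteTopology.comp QuotientGroup.continuous_mk).inv)
end

section
/- Let Γ be a compact topological group, A a locally compact Hausdorff space, and ℐ a weakly locally maximal (Γ,A)-groupoid. Then: (i) there exists a split Γ-space (Y,ϖ,φ) over A whose isotropy groupoid is ℐ, and Y is locally compact; (ii) if (X,π,φ) and (X′,π′,φ′) are two split Γ-spaces over A with isotropy groupoid ℐ and X, X′ are locally compact, then there is a unique Γ-equivariant homeomorphism F: X → X′ with φ′ = F ∘ φ. -/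
/-!
Common definitions for formalizing Hambleton–Hausmann, *Equivariant bundles and
isotropy representations*: `(Γ,A)`-groupoids, split `Γ`-spaces, equivariant
principal `G`-bundles, CW structures, and (cellular) representations.
-/

open Metric Set

namespace EqvBdl

section Groupoid

variable {Γ : Type*} [Group Γ] [TopologicalSpace Γ] {A : Type*} [TopologicalSpace A]

/-- The stalk (slice) of a subset `I ⊆ Γ × A` over a point `a : A`. -/
def slice (I : Set (Γ × A)) (a : A) : Set Γ := {γ : Γ | (γ, a) ∈ I}

/-- A `(Γ,A)`-groupoid: a subspace of `Γ × A` each of whose slices is a closed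
subgroup of `Γ`. -/
structure IsGAGroupoid (I : Set (Γ × A)) : Prop where
  one_mem : ∀ a : A, (1 : Γ) ∈ slice I a
  mul_mem : ∀ a : A, ∀ γ ∈ slice I a, ∀ δ ∈ slice I a, γ * δ ∈ slice I a
  inv_mem : ∀ a : A, ∀ γ ∈ slice I a, γ⁻¹ ∈ slice I a
  isClosed_slice : ∀ a : A, IsClosed (slice I a)

/-- A `(Γ,A)`-groupoid is weakly locally maximal if every point has a neighbourhood
on which all slices are subgroups of the slice at the point. -/
def WeaklyLocallyMaximal (I : Set (Γ × A)) : Prop :=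
  ∀ a : A, ∃ U ∈ nhds a, ∀ u ∈ U, slice I u ⊆ slice I a

/-- A `(Γ,A)`-groupoid is locally maximal if each point `a` and each neighbourhood `B`
of `a` admit an open set `a ∈ U ⊆ B` together with a homotopy `ρ_t : U → U` with
`ρ₀ = id`, `ρ₁ ≡ a` and `ℐ_u ⊆ ℐ_{ρ_t(u)}`. -/
def LocallyMaximalGroupoid (I : Set (Γ × A)) : Prop :=
  ∀ a : A, ∀ B ∈ nhds a, ∃ U : Set A, IsOpen U ∧ a ∈ U ∧ U ⊆ B ∧
    ∃ ρ : ℝ → A → A,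
      ContinuousOn (fun q : ℝ × A => ρ q.1 q.2) (Icc (0 : ℝ) 1 ×ˢ U) ∧
      (∀ t ∈ Icc (0 : ℝ) 1, ∀ u ∈ U, ρ t u ∈ U) ∧
      (∀ u ∈ U, ρ 0 u = u) ∧ (∀ u ∈ U, ρ 1 u = a) ∧
      (∀ t ∈ Icc (0 : ℝ) 1, ∀ u ∈ U, slice I u ⊆ slice I (ρ t u))

/-- "No small subgroups" relative to a subset `H ⊆ Γ`: there is a neighbourhood of `1`
such that the only subgroup of `Γ` contained in `H` and in this neighbourhood is trivial.
By the Gleason–Yamabe theorem, a compact (Hausdorff) topological group is a Lie group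
iff it has no small subgroups; we use this to say that a slice is a compact Lie group. -/
def HasNoSmallSubgroupsIn (H : Set Γ) : Prop :=
  ∃ U ∈ nhds (1 : Γ), ∀ K : Subgroup Γ, (K : Set Γ) ⊆ H ∩ U → K = ⊥

end Groupoid

/-- A split `Γ`-space over `A`: a `Γ`-space `X` with a continuous surjection
`proj : X → A` whose fibers are exactly the `Γ`-orbits, and a continuous
section `sec` of `proj`. -/
structure SplitGSpace (Γ : Type*) [Group Γ] [TopologicalSpace Γ]
    (A : Type*) [TopologicalSpace A] (X : Type*) [TopologicalSpace X] where
  smul : Γ → X → X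
  one_smul : ∀ x : X, smul 1 x = x
  mul_smul : ∀ γ δ : Γ, ∀ x : X, smul (γ * δ) x = smul γ (smul δ x)
  continuous_smul : Continuous fun q : Γ × X => smul q.1 q.2
  proj : X → A
  sec : A → X
  continuous_proj : Continuous proj
  continuous_sec : Continuous sec
  proj_sec : ∀ a : A, proj (sec a) = a
  proj_eq_iff : ∀ x y : X, proj x = proj y ↔ ∃ γ : Γ, y = smul γ x

namespace SplitGSpace

variable {Γ : Type*} [Group Γ] [TopologicalSpace Γ] {A : Type*} [TopologicalSpace A]
  {X : Type*} [TopologicalSpace X]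

/-- The isotropy groupoid of a split `Γ`-space: `{(γ,a) | γ · φ(a) = φ(a)}`. -/
def isotropy (S : SplitGSpace Γ A X) : Set (Γ × A) :=
  {q : Γ × A | S.smul q.1 (S.sec q.2) = S.sec q.2}

end SplitGSpace

section Bundles

variable {Γ : Type*} [Group Γ] [TopologicalSpace Γ] {A : Type*} [TopologicalSpace A]
  {X : Type*} [TopologicalSpace X]

/-- A trivialization of the data `(p, rsmul)` of a principal `G`-bundle over an
open set `U`: a `G`-equivariant fiber coordinate `τ` such that `(p, τ)` is a
homeomorphism from `p⁻¹(U)` onto `U × G` (with continuous inverse `σ`). -/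
def TrivializesOver {G : Type*} [Group G] [TopologicalSpace G]
    {E : Type*} [TopologicalSpace E]
    (p : E → X) (rsmul : E → G → E) (U : Set X) : Prop :=
  ∃ τ : E → G, ContinuousOn τ (p ⁻¹' U) ∧
    (∀ z ∈ p ⁻¹' U, ∀ g : G, τ (rsmul z g) = τ z * g) ∧
    ∃ σ : X × G → E, ContinuousOn σ (U ×ˢ (univ : Set G)) ∧
      (∀ z ∈ p ⁻¹' U, σ (p z, τ z) = z) ∧
      ∀ q : X × G, q.1 ∈ U → p (σ q) = q.1 ∧ τ (σ q) = q.2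

/-- A `Γ`-equivariant principal `G`-bundle over the split `Γ`-space `S`:
a locally trivial principal (right, free) `G`-bundle `p : E → X` with a left
`Γ`-action on `E` commuting with the `G`-action, for which `p` is `Γ`-equivariant. -/
structure EqvBundle (G : Type*) [Group G] [TopologicalSpace G]
    (S : SplitGSpace Γ A X) (E : Type*) [TopologicalSpace E] where
  p : E → X
  continuous_p : Continuous p
  rsmul : E → G → E
  rsmul_one : ∀ z : E, rsmul z 1 = z
  rsmul_mul : ∀ z : E, ∀ g h : G, rsmul z (g * h) = rsmul (rsmul z g) h
  continuous_rsmul : Continuous fun q : E × G => rsmul q.1 q.2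
  rsmul_free : ∀ z : E, ∀ g : G, rsmul z g = z → g = 1
  p_rsmul : ∀ z : E, ∀ g : G, p (rsmul z g) = p z
  lsmul : Γ → E → E
  lsmul_one : ∀ z : E, lsmul 1 z = z
  lsmul_mul : ∀ γ δ : Γ, ∀ z : E, lsmul (γ * δ) z = lsmul γ (lsmul δ z)
  continuous_lsmul : Continuous fun q : Γ × E => lsmul q.1 q.2
  lsmul_rsmul : ∀ γ : Γ, ∀ z : E, ∀ g : G, lsmul γ (rsmul z g) = rsmul (lsmul γ z) g
  p_lsmul : ∀ γ : Γ, ∀ z : E, p (lsmul γ z) = S.smul γ (p z)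
  locTriv : ∀ x : X, ∃ U : Set X, IsOpen U ∧ x ∈ U ∧ TrivializesOver p rsmul U

variable {G : Type*} [Group G] [TopologicalSpace G] {S : SplitGSpace Γ A X}
  {E E' : Type*} [TopologicalSpace E] [TopologicalSpace E']

/-- `φt` is a continuous lift of the section of `S` through the bundle `η`;
the existence of such a lift is equivalent to triviality of the pull-back
of `η` by the section, i.e. to `η` being a split bundle. -/
def IsLift (η : EqvBundle G S E) (φt : A → E) : Prop :=
  Continuous φt ∧ ∀ a : A, η.p (φt a) = S.sec a

/-- `α` is the isotropy representation of the split bundle `η` with respect to the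
lift `φt`, i.e. `γ · φt(a) = φt(a) · α(γ,a)` for all `(γ,a)` in the isotropy groupoid. -/
def IsIsotropyRep (η : EqvBundle G S E) (φt : A → E) (α : Γ × A → G) : Prop :=
  ∀ a : A, ∀ γ : Γ, (γ, a) ∈ S.isotropy → η.lsmul γ (φt a) = η.rsmul (φt a) (α (γ, a))

/-- For abelian `G`, the isotropy representation of any (not necessarily split)
equivariant bundle, defined via local lifts of the section. -/
def IsLocIsotropyRep (η : EqvBundle G S E) (α : Γ × A → G) : Prop :=
  ∀ a : A, ∃ U ∈ nhds a, ∃ φt : A → E, ContinuousOn φt U ∧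
    (∀ u ∈ U, η.p (φt u) = S.sec u) ∧
    ∀ u ∈ U, ∀ γ ∈ slice S.isotropy u, η.lsmul γ (φt u) = η.rsmul (φt u) (α (γ, u))

/-- Isomorphism of `Γ`-equivariant principal `G`-bundles over the identity of `X`. -/
def BundleIso (η : EqvBundle G S E) (η' : EqvBundle G S E') : Prop :=
  ∃ F : E ≃ₜ E', (∀ z : E, η'.p (F z) = η.p z) ∧
    (∀ z : E, ∀ g : G, F (η.rsmul z g) = η'.rsmul (F z) g) ∧
    ∀ γ : Γ, ∀ z : E, F (η.lsmul γ z) = η'.lsmul γ (F z)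

/-- A numerable bundle: it admits a trivializing open cover together with a
subordinate partition of unity. -/
def IsNumerable (η : EqvBundle G S E) : Prop :=
  ∃ (ι : Type) (U : ι → Set X) (pou : PartitionOfUnity ι X Set.univ),
    (∀ i : ι, IsOpen (U i) ∧ TrivializesOver η.p η.rsmul (U i)) ∧ pou.IsSubordinate U

end Bundles

section Reps

variable {Γ : Type*} [Group Γ] [TopologicalSpace Γ] {A : Type*} [TopologicalSpace A]
  {G : Type*} [Group G] [TopologicalSpace G]

/-- A continuous representation of the `(Γ,A)`-groupoid `I` in `G`: a map,
continuous on `I`, restricting to a group homomorphism on each slice. -/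
structure IsContRep (I : Set (Γ × A)) (α : Γ × A → G) : Prop where
  cont : ContinuousOn α I
  map_mul : ∀ a : A, ∀ γ ∈ slice I a, ∀ δ ∈ slice I a, α (γ * δ, a) = α (γ, a) * α (δ, a)

/-- A representation `α` of `I` in `G` is locally maximal if every point `a` has a
neighbourhood `U` with `ℐ_u ⊆ ℐ_a` for `u ∈ U` and a continuous `g : U → G` with
`α_u(γ) = g(u) α_a(γ) g(u)⁻¹` for all `u ∈ U`, `γ ∈ ℐ_u`. -/
def RepLocallyMaximal (I : Set (Γ × A)) (α : Γ × A → G) : Prop :=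
  ∀ a : A, ∃ U ∈ nhds a, (∀ u ∈ U, slice I u ⊆ slice I a) ∧
    ∃ g : A → G, ContinuousOn g U ∧
      ∀ u ∈ U, ∀ γ ∈ slice I u, α (γ, u) = g u * α (γ, a) * (g u)⁻¹

/-- Conjugacy of representations of `I` in `G` by a continuous map `ψ : A → G`. -/
def RepConj (I : Set (Γ × A)) (α α' : Γ × A → G) : Prop :=
  ∃ ψ : A → G, Continuous ψ ∧ ∀ q ∈ I, α' q = (ψ q.2)⁻¹ * α q * ψ q.2

end Reps

/-- A CW structure on the space `A`: a set of cells with characteristic maps from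
euclidean disks, such that the open cells partition `A`, characteristic maps are
injective on the open disk and send the boundary sphere to lower-dimensional cells,
the closure of each cell meets only finitely many cells (closure finiteness), and
`A` carries the weak topology determined by the closed cells. -/
structure CWStruct (A : Type*) [TopologicalSpace A] where
  cell : Type*
  dim : cell → ℕ
  charMap : (e : cell) → EuclideanSpace ℝ (Fin (dim e)) → A
  continuousOn_charMap : ∀ e : cell, ContinuousOn (charMap e) (closedBall 0 1)
  cellOf : A → cell
  cellOf_charMap : ∀ e : cell, ∀ x ∈ ball (0 : EuclideanSpace ℝ (Fin (dim e))) 1,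
    cellOf (charMap e x) = e
  charMap_surj : ∀ a : A, ∃ x ∈ ball (0 : EuclideanSpace ℝ (Fin (dim (cellOf a)))) 1,
    charMap (cellOf a) x = a
  injOn_ball : ∀ e : cell, InjOn (charMap e) (ball 0 1)
  sphere_dim_lt : ∀ e : cell, ∀ x ∈ sphere (0 : EuclideanSpace ℝ (Fin (dim e))) 1,
    dim (cellOf (charMap e x)) < dim e
  closure_finite : ∀ e : cell,
    {f : cell | ∃ x ∈ closedBall (0 : EuclideanSpace ℝ (Fin (dim e))) 1,
      cellOf (charMap e x) = f}.Finite
  weak_topology : ∀ s : Set A,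
    IsClosed s ↔ ∀ e : cell, IsClosed (charMap e ⁻¹' s ∩ closedBall 0 1)

namespace CWStruct

variable {A : Type*} [TopologicalSpace A]

/-- The open cell of `e`. -/
def openCell (C : CWStruct A) (e : C.cell) : Set A := C.charMap e '' ball 0 1

/-- The closed cell of `e`. -/
def closedCell (C : CWStruct A) (e : C.cell) : Set A := C.charMap e '' closedBall 0 1

/-- The center point of the cell `e` (a chosen point of the open cell). -/
def center (C : CWStruct A) (e : C.cell) : A := C.charMap e 0

/-- The face relation on cells: `f ≤ e` iff the open cell of `f` meets the
closed cell of `e`. -/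
def Face (C : CWStruct A) (f e : C.cell) : Prop :=
  ∃ x ∈ closedBall (0 : EuclideanSpace ℝ (Fin (C.dim e))) 1, C.cellOf (C.charMap e x) = f

/-- A graph is a CW-complex of dimension at most 1. -/
def IsGraph (C : CWStruct A) : Prop := ∀ e : C.cell, C.dim e ≤ 1

/-- A regular CW-complex: characteristic maps are injective on the closed disk,
and each boundary sphere maps onto a subcomplex (a union of closed cells). -/
def IsRegular (C : CWStruct A) : Prop :=
  ∀ e : C.cell, InjOn (C.charMap e) (closedBall 0 1) ∧
    ∀ x ∈ sphere (0 : EuclideanSpace ℝ (Fin (C.dim e))) 1,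
      C.closedCell (C.cellOf (C.charMap e x)) ⊆ C.charMap e '' sphere 0 1

end CWStruct

section Cellular

variable {Γ : Type*} [Group Γ] [TopologicalSpace Γ] {A : Type*} [TopologicalSpace A]

/-- A cellular `(Γ,A)`-groupoid: locally maximal, with slices constant on the
open cells of the CW structure `C`. -/
def IsCellular (C : CWStruct A) (I : Set (Γ × A)) : Prop :=
  LocallyMaximalGroupoid I ∧
    ∀ a b : A, C.cellOf a = C.cellOf b → slice I a = slice I b

/-- The group `ℐ(e)` attached by a cellular groupoid to a cell `e`. -/
def cellGrp (C : CWStruct A) (I : Set (Γ × A)) (e : C.cell) : Set Γ :=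
  slice I (C.center e)

/-- A proper `(Γ,A)`-groupoid: a cellular groupoid all of whose slices are compact
Lie groups (compactness together with no small subgroups; by Gleason–Yamabe, a
compact Hausdorff group is Lie iff it has no small subgroups). -/
def IsProper (C : CWStruct A) (I : Set (Γ × A)) : Prop :=
  IsGAGroupoid I ∧ IsCellular C I ∧
    ∀ a : A, IsCompact (slice I a) ∧ HasNoSmallSubgroupsIn (slice I a)

variable {G : Type*} [Group G] [TopologicalSpace G]

/-- `β` is a continuous homomorphism on the subgroup-carrier `H ⊆ Γ`. -/
structure HomOn (H : Set Γ) (β : Γ → G) : Prop where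
  cont : ContinuousOn β H
  map_mul : ∀ γ ∈ H, ∀ δ ∈ H, β (γ * δ) = β γ * β δ

/-- Conjugacy of two maps on `H` by a single element of `G`. -/
def ConjOn (H : Set Γ) (β β' : Γ → G) : Prop :=
  ∃ g : G, ∀ γ ∈ H, β' γ = g⁻¹ * β γ * g

/-- A cellular representation of the cellular groupoid `I` in `G`: a family of
continuous homomorphisms `β_e : ℐ(e) → G` with `β_e = β_f | ℐ(e)` whenever `f ≤ e`. -/
structure IsCellRep (C : CWStruct A) (I : Set (Γ × A)) (β : C.cell → Γ → G) : Prop where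
  hom : ∀ e : C.cell, HomOn (cellGrp C I e) (β e)
  compat : ∀ f e : C.cell, C.Face f e → ∀ γ ∈ cellGrp C I e, β e γ = β f γ

/-- A representative family for an element of `R̄ep^G_cell(ℐ)`: a family of continuous
homomorphisms `β_e : ℐ(e) → G` satisfying the face compatibilities up to conjugacy. -/
structure IsBarCellRep (C : CWStruct A) (I : Set (Γ × A)) (β : C.cell → Γ → G) : Prop where
  hom : ∀ e : C.cell, HomOn (cellGrp C I e) (β e)
  compat : ∀ f e : C.cell, C.Face f e → ConjOn (cellGrp C I e) (β f) (β e)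

/-- The cellular representation on the `k`-skeleton. -/
structure IsCellRepLe (C : CWStruct A) (I : Set (Γ × A)) (k : ℕ) (β : C.cell → Γ → G) :
    Prop where
  hom : ∀ e : C.cell, C.dim e ≤ k → HomOn (cellGrp C I e) (β e)
  compat : ∀ f e : C.cell, C.dim e ≤ k → C.Face f e → ∀ γ ∈ cellGrp C I e, β e γ = β f γ

/-- A `R̄ep_cell` representative family on the `k`-skeleton. -/
structure IsBarCellRepLe (C : CWStruct A) (I : Set (Γ × A)) (k : ℕ) (β : C.cell → Γ → G) :
    Prop where
  hom : ∀ e : C.cell, C.dim e ≤ k → HomOn (cellGrp C I e) (β e)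
  compat : ∀ f e : C.cell, C.dim e ≤ k → C.Face f e → ConjOn (cellGrp C I e) (β f) (β e)

/-- The continuous representation associated to a cellular representation. -/
def toRep (C : CWStruct A) (β : C.cell → Γ → G) : Γ × A → G :=
  fun q => β (C.cellOf q.2) q.1

/-- The restriction of a representation at (the center of) the cell `e`. -/
def restrictAt (C : CWStruct A) (α : Γ × A → G) (e : C.cell) : Γ → G :=
  fun γ => α (γ, C.center e)

/-- `ı([α]) = [β]` in `R̄ep^G_cell(ℐ)`: at each cell, the restriction of `α` is
conjugate to `β_e`. -/
def BarMatches (C : CWStruct A) (I : Set (Γ × A)) (α : Γ × A → G) (β : C.cell → Γ → G) :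
    Prop :=
  ∀ e : C.cell, ConjOn (cellGrp C I e) (restrictAt C α e) (β e)

end Cellular

section GammaCW

variable {Γ : Type*} [Group Γ] [TopologicalSpace Γ] {A : Type*} [TopologicalSpace A]
  {X : Type*} [TopologicalSpace X]

/-- A split `Γ`-CW-complex over `A`: a split `Γ`-space whose isotropy groupoid is
cellular, such that `A` carries the quotient topology and `X` carries the weak
topology determined by the `Γ`-cells `Γ × D^{d(e)} → X`, `(γ,x) ↦ γ·φ(σ_e(x))`. -/
def IsGammaCW (C : CWStruct A) (S : SplitGSpace Γ A X) : Prop :=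
  IsCellular C S.isotropy ∧
  (∀ V : Set A, IsOpen V ↔ IsOpen (S.proj ⁻¹' V)) ∧
  ∀ W : Set X, IsOpen W ↔ ∀ e : C.cell,
    IsOpen {q : Γ × (closedBall (0 : EuclideanSpace ℝ (Fin (C.dim e))) 1) |
      S.smul q.1 (S.sec (C.charMap e q.2.1)) ∈ W}

end GammaCW

section PlainBundles

variable {A : Type*} [TopologicalSpace A]

/-- A (non-equivariant) principal `G`-bundle over `A`. -/
structure PBundle (G : Type*) [Group G] [TopologicalSpace G]
    (A : Type*) [TopologicalSpace A] (F : Type*) [TopologicalSpace F] where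
  p : F → A
  continuous_p : Continuous p
  rsmul : F → G → F
  rsmul_one : ∀ z : F, rsmul z 1 = z
  rsmul_mul : ∀ z : F, ∀ g h : G, rsmul z (g * h) = rsmul (rsmul z g) h
  continuous_rsmul : Continuous fun q : F × G => rsmul q.1 q.2
  rsmul_free : ∀ z : F, ∀ g : G, rsmul z g = z → g = 1
  p_rsmul : ∀ z : F, ∀ g : G, p (rsmul z g) = p z
  locTriv : ∀ a : A, ∃ U : Set A, IsOpen U ∧ a ∈ U ∧ TrivializesOver p rsmul U

variable {G : Type*} [Group G] [TopologicalSpace G]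
  {F F' : Type*} [TopologicalSpace F] [TopologicalSpace F']

/-- Isomorphism of principal `G`-bundles over `A`. -/
def PBundleIso (ξ : PBundle G A F) (ξ' : PBundle G A F') : Prop :=
  ∃ h : F ≃ₜ F', (∀ w : F, ξ'.p (h w) = ξ.p w) ∧
    ∀ w : F, ∀ g : G, h (ξ.rsmul w g) = ξ'.rsmul (h w) g

variable {Γ : Type*} [Group Γ] [TopologicalSpace Γ] {X : Type*} [TopologicalSpace X]

/-- `ξ` is (a model for) the pull-back `φ*η` of the equivariant bundle `η` along
the section `φ` of the split `Γ`-space `S`. -/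
def IsSecPullback {E : Type*} [TopologicalSpace E] {S : SplitGSpace Γ A X}
    (η : EqvBundle G S E) (ξ : PBundle G A F) : Prop :=
  ∃ f : F → E, Continuous f ∧ (∀ w : F, ∀ g : G, f (ξ.rsmul w g) = η.rsmul (f w) g) ∧
    Topology.IsEmbedding (fun w : F => (ξ.p w, f w)) ∧
    Set.range (fun w : F => (ξ.p w, f w)) = {q : A × E | η.p q.2 = S.sec q.1}

/-- `η₃` is (a model for) the tensor product `η₁ ⊗ η₂` of two equivariant principal
`G`-bundles (`G` abelian): there is a quotient map `t` from the fibered product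
`E₁ ×_X E₂` identifying exactly the anti-diagonal `G`-orbits. -/
def IsTensorOf {E₁ E₂ E₃ : Type*} [TopologicalSpace E₁] [TopologicalSpace E₂]
    [TopologicalSpace E₃] {S : SplitGSpace Γ A X}
    (η₁ : EqvBundle G S E₁) (η₂ : EqvBundle G S E₂) (η₃ : EqvBundle G S E₃) : Prop :=
  ∃ t : E₁ × E₂ → E₃,
    ContinuousOn t {q : E₁ × E₂ | η₁.p q.1 = η₂.p q.2} ∧
    (∀ q : E₁ × E₂, η₁.p q.1 = η₂.p q.2 → η₃.p (t q) = η₁.p q.1) ∧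
    (∀ q : E₁ × E₂, η₁.p q.1 = η₂.p q.2 → ∀ g : G,
      t (η₁.rsmul q.1 g, q.2) = η₃.rsmul (t q) g) ∧
    (∀ q : E₁ × E₂, η₁.p q.1 = η₂.p q.2 → ∀ γ : Γ,
      t (η₁.lsmul γ q.1, η₂.lsmul γ q.2) = η₃.lsmul γ (t q)) ∧
    (∀ z : E₃, ∃ q : E₁ × E₂, η₁.p q.1 = η₂.p q.2 ∧ t q = z) ∧
    (∀ q q' : E₁ × E₂, η₁.p q.1 = η₂.p q.2 → η₁.p q'.1 = η₂.p q'.2 →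
      (t q = t q' ↔ ∃ g : G, q'.1 = η₁.rsmul q.1 g ∧ q'.2 = η₂.rsmul q.2 g⁻¹)) ∧
    (∀ W : Set E₃, IsOpen W ↔
      IsOpen {q : {q : E₁ × E₂ // η₁.p q.1 = η₂.p q.2} | t q.1 ∈ W})

/-- `ξ₃` is (a model for) the tensor product `ξ₁ ⊗ ξ₂` of two principal `G`-bundles
over `A` (`G` abelian). -/
def IsTensorOfP {F₁ F₂ F₃ : Type*} [TopologicalSpace F₁] [TopologicalSpace F₂]
    [TopologicalSpace F₃]
    (ξ₁ : PBundle G A F₁) (ξ₂ : PBundle G A F₂) (ξ₃ : PBundle G A F₃) : Prop :=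
  ∃ t : F₁ × F₂ → F₃,
    ContinuousOn t {q : F₁ × F₂ | ξ₁.p q.1 = ξ₂.p q.2} ∧
    (∀ q : F₁ × F₂, ξ₁.p q.1 = ξ₂.p q.2 → ξ₃.p (t q) = ξ₁.p q.1) ∧
    (∀ q : F₁ × F₂, ξ₁.p q.1 = ξ₂.p q.2 → ∀ g : G,
      t (ξ₁.rsmul q.1 g, q.2) = ξ₃.rsmul (t q) g) ∧
    (∀ z : F₃, ∃ q : F₁ × F₂, ξ₁.p q.1 = ξ₂.p q.2 ∧ t q = z) ∧
    (∀ q q' : F₁ × F₂, ξ₁.p q.1 = ξ₂.p q.2 → ξ₁.p q'.1 = ξ₂.p q'.2 →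
      (t q = t q' ↔ ∃ g : G, q'.1 = ξ₁.rsmul q.1 g ∧ q'.2 = ξ₂.rsmul q.2 g⁻¹)) ∧
    (∀ W : Set F₃, IsOpen W ↔
      IsOpen {q : {q : F₁ × F₂ // ξ₁.p q.1 = ξ₂.p q.2} | t q.1 ∈ W})

end PlainBundles

end EqvBdl

/-!
STATEMENT 3 (Proposition 2.1, Reconstruction): Let `Γ` be a compact topological
group, `A` a locally compact Hausdorff space, and `ℐ` a weakly locally maximal
`(Γ,A)`-groupoid. Then:
(i) there exists a split `Γ`-space `(Y,ϖ,φ)` over `A` whose isotropy groupoid is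
`ℐ`, and `Y` is locally compact (Hausdorff);
(ii) if `(X,π,φ)` and `(X',π',φ')` are two split `Γ`-spaces over `A` with isotropy
groupoid `ℐ` and `X`, `X'` are locally compact Hausdorff, then there is a unique
`Γ`-equivariant homeomorphism `F : X → X'` with `φ' = F ∘ φ`.
-/

open EqvBdl

section ReconAux

variable {Γ : Type*} [Group Γ] [TopologicalSpace Γ]
  {A : Type*} [TopologicalSpace A]

/-- A weakly locally maximal groupoid with closed slices is closed. -/
lemma ReconAux.isClosed_groupoid {I : Set (Γ × A)} (hI : IsGAGroupoid I)
    (hwlm : WeaklyLocallyMaximal I) : IsClosed I := by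
  rw [← isOpen_compl_iff, isOpen_iff_mem_nhds]
  rintro ⟨γ, a⟩ h
  obtain ⟨U, hU, hsub⟩ := hwlm a
  have hγ : γ ∈ (slice I a)ᶜ := h
  have hV : IsOpen (slice I a)ᶜ := (hI.isClosed_slice a).isOpen_compl
  have hmem : (slice I a)ᶜ ×ˢ U ∈ nhds (γ, a) :=
    prod_mem_nhds (hV.mem_nhds hγ) hU
  refine Filter.mem_of_superset hmem ?_
  rintro ⟨δ, u⟩ ⟨hδ, hu⟩ hmemI
  exact hδ (hsub u hu hmemI)

variable {X : Type*} [TopologicalSpace X]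

namespace ReconAux

/-- The canonical map `Γ × A → X` for a split `Γ`-space. -/
def Qmap (S : SplitGSpace Γ A X) : Γ × A → X := fun p => S.smul p.1 (S.sec p.2)

lemma continuous_Qmap (S : SplitGSpace Γ A X) : Continuous (Qmap S) :=
  S.continuous_smul.comp (continuous_fst.prodMk (S.continuous_sec.comp continuous_snd))

lemma proj_Qmap (S : SplitGSpace Γ A X) (p : Γ × A) : S.proj (Qmap S p) = p.2 := by
  have h := (S.proj_eq_iff (S.sec p.2) (Qmap S p)).mpr ⟨p.1, rfl⟩
  rw [← h, S.proj_sec]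

lemma surjective_Qmap (S : SplitGSpace Γ A X) : Function.Surjective (Qmap S) := by
  intro x
  have h : S.proj (S.sec (S.proj x)) = S.proj x := S.proj_sec _
  obtain ⟨γ, hγ⟩ := (S.proj_eq_iff (S.sec (S.proj x)) x).mp h
  exact ⟨(γ, S.proj x), hγ.symm⟩

lemma Qmap_eq_iff (S : SplitGSpace Γ A X) (p q : Γ × A) :
    Qmap S p = Qmap S q ↔ p.2 = q.2 ∧ (p.1⁻¹ * q.1, p.2) ∈ S.isotropy := by
  obtain ⟨γ1, a⟩ := p
  obtain ⟨γ2, b⟩ := q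
  constructor
  · intro h
    have ha : a = b := by
      have h1 : S.proj (Qmap S (γ1, a)) = a := proj_Qmap S (γ1, a)
      have h2 : S.proj (Qmap S (γ2, b)) = b := proj_Qmap S (γ2, b)
      rw [← h1, ← h2, h]
    subst ha
    refine ⟨rfl, ?_⟩
    show S.smul (γ1⁻¹ * γ2) (S.sec a) = S.sec a
    have h' : S.smul γ1 (S.sec a) = S.smul γ2 (S.sec a) := h
    calc S.smul (γ1⁻¹ * γ2) (S.sec a)
        = S.smul γ1⁻¹ (S.smul γ2 (S.sec a)) := S.mul_smul _ _ _
      _ = S.smul γ1⁻¹ (S.smul γ1 (S.sec a)) := by rw [h']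
      _ = S.smul (γ1⁻¹ * γ1) (S.sec a) := (S.mul_smul _ _ _).symm
      _ = S.sec a := by rw [inv_mul_cancel, S.one_smul]
  · rintro ⟨ha, hmem⟩
    simp only at ha
    subst ha
    have hmem' : S.smul (γ1⁻¹ * γ2) (S.sec a) = S.sec a := hmem
    show S.smul γ1 (S.sec a) = S.smul γ2 (S.sec a)
    calc S.smul γ1 (S.sec a)
        = S.smul γ1 (S.smul (γ1⁻¹ * γ2) (S.sec a)) := by rw [hmem']
      _ = S.smul (γ1 * (γ1⁻¹ * γ2)) (S.sec a) := (S.mul_smul _ _ _).symm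
      _ = S.smul γ2 (S.sec a) := by rw [mul_inv_cancel_left]

lemma isClosedMap_Qmap [CompactSpace Γ] [T2Space X] [T2Space A]
    (S : SplitGSpace Γ A X) : IsClosedMap (Qmap S) := by
  intro C hC
  have hD : IsClosed {q : Γ × X | (q.1, S.proj q.2) ∈ C ∧
      S.smul q.1 (S.sec (S.proj q.2)) = q.2} := by
    apply IsClosed.inter
    · exact hC.preimage (continuous_fst.prodMk (S.continuous_proj.comp continuous_snd))
    · apply isClosed_eq _ continuous_snd
      exact S.continuous_smul.comp
        (continuous_fst.prodMk
          ((S.continuous_sec.comp S.continuous_proj).comp continuous_snd))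
  have himg : Qmap S '' C = Prod.snd '' {q : Γ × X | (q.1, S.proj q.2) ∈ C ∧
      S.smul q.1 (S.sec (S.proj q.2)) = q.2} := by
    have hps : ∀ p : Γ × A, S.proj (S.smul p.1 (S.sec p.2)) = p.2 := proj_Qmap S
    ext x
    constructor
    · rintro ⟨p, hp, rfl⟩
      refine ⟨(p.1, Qmap S p), ⟨?_, ?_⟩, rfl⟩
      · show (p.1, S.proj (S.smul p.1 (S.sec p.2))) ∈ C
        rw [hps]
        exact hp
      · show S.smul p.1 (S.sec (S.proj (S.smul p.1 (S.sec p.2)))) = _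
        rw [hps]
        rfl
    · rintro ⟨⟨γ, x⟩, ⟨h1, h2⟩, rfl⟩
      exact ⟨(γ, S.proj x), h1, h2⟩
  rw [himg]
  exact isClosedMap_snd_of_compactSpace _ hD

lemma isQuotientMap_Qmap [CompactSpace Γ] [T2Space X] [T2Space A]
    (S : SplitGSpace Γ A X) : Topology.IsQuotientMap (Qmap S) :=
  (isClosedMap_Qmap S).isQuotientMap (continuous_Qmap S) (surjective_Qmap S)

lemma Qmap_smul (S : SplitGSpace Γ A X) (γ : Γ) (p : Γ × A) :
    S.smul γ (Qmap S p) = Qmap S (γ * p.1, p.2) := (S.mul_smul _ _ _).symm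

lemma Qmap_one (S : SplitGSpace Γ A X) (a : A) : Qmap S (1, a) = S.sec a :=
  S.one_smul _

/-- The equivalence relation on `Γ × A` whose quotient reconstructs the split space. -/
def rel (I : Set (Γ × A)) : (Γ × A) → (Γ × A) → Prop :=
  fun p q => p.2 = q.2 ∧ (p.1⁻¹ * q.1, p.2) ∈ I

lemma rel_equivalence {I : Set (Γ × A)} (hI : IsGAGroupoid I) : Equivalence (rel I) := by
  constructor
  · intro p
    refine ⟨rfl, ?_⟩
    have := hI.one_mem p.2
    rw [inv_mul_cancel]; exact this
  · rintro p q ⟨h1, h2⟩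
    refine ⟨h1.symm, ?_⟩
    have := hI.inv_mem p.2 _ h2
    have h3 : ((p.1⁻¹ * q.1)⁻¹, p.2) ∈ I := this
    have h4 : (p.1⁻¹ * q.1)⁻¹ = q.1⁻¹ * p.1 := by group
    rw [h4] at h3
    rwa [← h1]
  · rintro p q z ⟨h1, h2⟩ ⟨h3, h4⟩
    refine ⟨h1.trans h3, ?_⟩
    rw [← h1] at h4
    have := hI.mul_mem p.2 _ h2 _ h4
    have h5 : p.1⁻¹ * q.1 * (q.1⁻¹ * z.1) = p.1⁻¹ * z.1 := by group
    rwa [h5] at this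

lemma mk_eq_mk {I : Set (Γ × A)} (hI : IsGAGroupoid I) (p q : Γ × A) :
    Quot.mk (rel I) p = Quot.mk (rel I) q ↔ rel I p q :=
  ⟨fun h => (rel_equivalence hI).eqvGen_iff.mp (Quot.eqvGen_exact h),
    fun h => Quot.sound h⟩

variable [IsTopologicalGroup Γ] [CompactSpace Γ] [T2Space Γ] [T2Space A]

lemma isClosedMap_mk {I : Set (Γ × A)} (hI : IsGAGroupoid I) (hIc : IsClosed I) :
    IsClosedMap (Quot.mk (rel I)) := by
  intro C hC
  rw [← isQuotientMap_quot_mk.isClosed_preimage]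
  have hD : IsClosed {z : Γ × (Γ × A) | (z.1, z.2.2) ∈ C ∧ (z.1⁻¹ * z.2.1, z.2.2) ∈ I} := by
    apply IsClosed.inter
    · exact hC.preimage (continuous_fst.prodMk (continuous_snd.comp continuous_snd))
    · exact hIc.preimage (((continuous_fst.inv).mul
        (continuous_fst.comp continuous_snd)).prodMk (continuous_snd.comp continuous_snd))
  have heq : Quot.mk (rel I) ⁻¹' (Quot.mk (rel I) '' C) =
      Prod.snd '' {z : Γ × (Γ × A) | (z.1, z.2.2) ∈ C ∧ (z.1⁻¹ * z.2.1, z.2.2) ∈ I} := by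
    ext p
    constructor
    · rintro ⟨p', hp', hmkeq⟩
      obtain ⟨hb, hmem⟩ := (mk_eq_mk hI p' p).mp hmkeq
      refine ⟨(p'.1, p), ⟨?_, ?_⟩, rfl⟩
      · rw [← hb]; exact hp'
      · rw [← hb]; exact hmem
    · rintro ⟨⟨δ, p'⟩, ⟨h1, h2⟩, rfl⟩
      exact ⟨(δ, p'.2), h1, (mk_eq_mk hI _ _).mpr ⟨rfl, h2⟩⟩
  rw [heq]
  exact isClosedMap_snd_of_compactSpace _ hD

lemma isCompact_fiber {I : Set (Γ × A)} (hI : IsGAGroupoid I) (hIc : IsClosed I)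
    (y : Quot (rel I)) : IsCompact (Quot.mk (rel I) ⁻¹' {y}) := by
  obtain ⟨⟨γ0, a⟩, rfl⟩ := Quot.exists_rep y
  have heq : Quot.mk (rel I) ⁻¹' {Quot.mk (rel I) (γ0, a)} =
      {p : Γ × A | p.2 = a} ∩ {p : Γ × A | (p.1⁻¹ * γ0, p.2) ∈ I} := by
    ext p
    rw [Set.mem_preimage, Set.mem_singleton_iff, mk_eq_mk hI]
    exact Iff.rfl
  rw [heq]
  have hcpt : IsCompact ((Set.univ : Set Γ) ×ˢ ({a} : Set A)) :=
    isCompact_univ.prod isCompact_singleton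
  refine IsCompact.of_isClosed_subset hcpt ?_ ?_
  · apply IsClosed.inter
    · exact isClosed_eq continuous_snd continuous_const
    · exact hIc.preimage ((continuous_fst.inv.mul continuous_const).prodMk continuous_snd)
  · rintro p ⟨h1, -⟩
    exact ⟨Set.mem_univ _, h1⟩

lemma isProperMap_mk {I : Set (Γ × A)} (hI : IsGAGroupoid I) (hIc : IsClosed I) :
    IsProperMap (Quot.mk (rel I)) :=
  isProperMap_iff_isClosedMap_and_compact_fibers.mpr
    ⟨continuous_quot_mk, isClosedMap_mk hI hIc, isCompact_fiber hI hIc⟩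

end ReconAux

end ReconAux

theorem reconstruction_of_split_space
    {Γ : Type u} [Group Γ] [TopologicalSpace Γ] [IsTopologicalGroup Γ]
    [CompactSpace Γ] [T2Space Γ]
    {A : Type u} [TopologicalSpace A] [T2Space A] [LocallyCompactSpace A]
    (I : Set (Γ × A)) (hI : IsGAGroupoid I) (hwlm : WeaklyLocallyMaximal I) :
    (∃ (Y : Type u) (_ : TopologicalSpace Y) (S : SplitGSpace Γ A Y),
        S.isotropy = I ∧ T2Space Y ∧ LocallyCompactSpace Y) ∧
    (∀ (X : Type v) (X' : Type w) (_ : TopologicalSpace X) (_ : TopologicalSpace X')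
        (S : SplitGSpace Γ A X) (S' : SplitGSpace Γ A X'),
        S.isotropy = I → S'.isotropy = I →
        T2Space X → LocallyCompactSpace X → T2Space X' → LocallyCompactSpace X' →
        ∃ F : X ≃ₜ X',
          ((∀ γ : Γ, ∀ x : X, F (S.smul γ x) = S'.smul γ (F x)) ∧
            ∀ a : A, F (S.sec a) = S'.sec a) ∧
          ∀ F' : X ≃ₜ X',
            ((∀ γ : Γ, ∀ x : X, F' (S.smul γ x) = S'.smul γ (F' x)) ∧
              ∀ a : A, F' (S.sec a) = S'.sec a) →
            ∀ x : X, F' x = F x) := by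
  classical
  constructor
  · -- Part (i): construction of the split `Γ`-space as a quotient of `Γ × A`.
    have hIc : IsClosed I := ReconAux.isClosed_groupoid hI hwlm
    set q : Γ × A → Quot (ReconAux.rel I) := Quot.mk (ReconAux.rel I) with hq
    have hmk := ReconAux.mk_eq_mk hI
    have hclosed : IsClosedMap q := ReconAux.isClosedMap_mk hI hIc
    have hfib : ∀ y, IsCompact (q ⁻¹' {y}) := ReconAux.isCompact_fiber hI hIc
    have hproper : IsProperMap q := ReconAux.isProperMap_mk hI hIc
    have hqm2 : Topology.IsQuotientMap (Prod.map (id : Γ → Γ) q) :=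
      (isProperMap_id.prodMap hproper).isClosedMap.isQuotientMap
        (continuous_id.prodMap continuous_quot_mk)
        (Function.Surjective.prodMap Function.surjective_id fun y => Quot.exists_rep y)
    have hresp : ∀ γ : Γ, ∀ p p' : Γ × A, ReconAux.rel I p p' →
        q (γ * p.1, p.2) = q (γ * p'.1, p'.2) := by
      rintro γ p p' ⟨h1, h2⟩
      refine Quot.sound ⟨h1, ?_⟩
      have h3 : (γ * p.1)⁻¹ * (γ * p'.1) = p.1⁻¹ * p'.1 := by group
      rw [h3]; exact h2
    let S : SplitGSpace Γ A (Quot (ReconAux.rel I)) :=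
      { smul := fun γ => Quot.lift (fun p => q (γ * p.1, p.2)) (hresp γ)
        one_smul := by
          intro x
          induction x using Quot.ind with
          | _ p =>
            show q (1 * p.1, p.2) = q p
            rw [one_mul]
        mul_smul := by
          intro γ δ x
          induction x using Quot.ind with
          | _ p =>
            show q (γ * δ * p.1, p.2) = q (γ * (δ * p.1), p.2)
            rw [mul_assoc]
        continuous_smul := by
          rw [hqm2.continuous_iff]
          show Continuous fun z : Γ × (Γ × A) => q (z.1 * z.2.1, z.2.2)
          exact continuous_quot_mk.comp
            ((continuous_fst.mul (continuous_fst.comp continuous_snd)).prodMk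
              (continuous_snd.comp continuous_snd))
        proj := Quot.lift (fun p => p.2) (fun p p' h => h.1)
        sec := fun a => q (1, a)
        continuous_proj := isQuotientMap_quot_mk.continuous_iff.mpr continuous_snd
        continuous_sec := continuous_quot_mk.comp (continuous_const.prodMk continuous_id)
        proj_sec := fun a => rfl
        proj_eq_iff := by
          intro x y
          induction x using Quot.ind with
          | _ p =>
          induction y using Quot.ind with
          | _ p' =>
          show p.2 = p'.2 ↔ _
          constructor
          · intro h
            refine ⟨p'.1 * p.1⁻¹, ?_⟩
            show q p' = q (p'.1 * p.1⁻¹ * p.1, p.2)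
            rw [inv_mul_cancel_right, h]
          · rintro ⟨γ, hy⟩
            have hy' : q p' = q (γ * p.1, p.2) := hy
            exact ((hmk _ _).mp hy').1.symm }
    have hiso : S.isotropy = I := by
      ext ⟨γ, a⟩
      have : ((γ, a) ∈ S.isotropy) ↔ q (γ * 1, a) = q (1, a) := Iff.rfl
      rw [this, hmk]
      constructor
      · rintro ⟨-, h⟩
        have h' : (γ⁻¹, a) ∈ I := by simpa using h
        have := hI.inv_mem a _ h'
        simpa [slice] using this
      · intro h
        refine ⟨rfl, ?_⟩
        have := hI.inv_mem a _ h
        have hmem : (γ⁻¹, a) ∈ I := this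
        simpa using hmem
    have hT2 : T2Space (Quot (ReconAux.rel I)) := by
      refine ⟨fun {y1 y2} hne => ?_⟩
      obtain ⟨p1, rfl⟩ := Quot.exists_rep y1
      obtain ⟨p2, rfl⟩ := Quot.exists_rep y2
      have hdisj : Disjoint (q ⁻¹' {q p1}) (q ⁻¹' {q p2}) := by
        rw [Set.disjoint_left]
        rintro p h1 h2
        rw [Set.mem_preimage, Set.mem_singleton_iff] at h1 h2
        exact hne (h1.symm.trans h2)
      obtain ⟨U, V, hUo, hVo, hU, hV, hUV⟩ :=
        SeparatedNhds.of_isCompact_isCompact (hfib (q p1)) (hfib (q p2)) hdisj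
      refine ⟨(q '' Uᶜ)ᶜ, (q '' Vᶜ)ᶜ,
        (hclosed _ hUo.isClosed_compl).isOpen_compl,
        (hclosed _ hVo.isClosed_compl).isOpen_compl, ?_, ?_, ?_⟩
      · rintro ⟨p, hp, hqe⟩
        exact hp (hU (show p ∈ q ⁻¹' {q p1} from hqe))
      · rintro ⟨p, hp, hqe⟩
        exact hp (hV (show p ∈ q ⁻¹' {q p2} from hqe))
      · rw [Set.disjoint_left]
        intro y hy1 hy2
        obtain ⟨p, rfl⟩ := Quot.exists_rep y
        have hpU : p ∈ U := by
          by_contra h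
          exact hy1 ⟨p, h, rfl⟩
        have hpV : p ∈ V := by
          by_contra h
          exact hy2 ⟨p, h, rfl⟩
        exact Set.disjoint_left.mp hUV hpU hpV
    have hwlc : WeaklyLocallyCompactSpace (Quot (ReconAux.rel I)) := by
      refine ⟨fun y => ?_⟩
      obtain ⟨p, rfl⟩ := Quot.exists_rep y
      obtain ⟨K, hKc, hKsub⟩ := exists_compact_superset (hfib (q p))
      refine ⟨q '' K, hKc.image continuous_quot_mk, ?_⟩
      rw [_root_.mem_nhds_iff]
      refine ⟨(q '' (interior K)ᶜ)ᶜ, ?_,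
        (hclosed _ isOpen_interior.isClosed_compl).isOpen_compl, ?_⟩
      · intro y hy
        obtain ⟨p', rfl⟩ := Quot.exists_rep y
        refine ⟨p', interior_subset ?_, rfl⟩
        by_contra h
        exact hy ⟨p', h, rfl⟩
      · rintro ⟨p', hp', he⟩
        exact hp' (hKsub (show p' ∈ q ⁻¹' {q p} from he))
    haveI := hT2
    haveI := hwlc
    exact ⟨Quot (ReconAux.rel I), inferInstance, S, hiso, hT2, inferInstance⟩
  · -- Part (ii): uniqueness of the split `Γ`-space with given isotropy groupoid.
    intro X X' tX tX' S S' hS hS' hT2X _hLCX hT2X' _hLCX'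
    haveI := hT2X
    haveI := hT2X'
    have hrel : ∀ p p' : Γ × A,
        ReconAux.Qmap S p = ReconAux.Qmap S p' ↔
        ReconAux.Qmap S' p = ReconAux.Qmap S' p' := by
      intro p p'
      rw [ReconAux.Qmap_eq_iff, ReconAux.Qmap_eq_iff, hS, hS']
    have hq : Topology.IsQuotientMap (ReconAux.Qmap S) := ReconAux.isQuotientMap_Qmap S
    have hq' : Topology.IsQuotientMap (ReconAux.Qmap S') := ReconAux.isQuotientMap_Qmap S'
    let s : X → Γ × A := Function.surjInv (ReconAux.surjective_Qmap S)
    let s' : X' → Γ × A := Function.surjInv (ReconAux.surjective_Qmap S')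
    let F : X → X' := fun x => ReconAux.Qmap S' (s x)
    let G : X' → X := fun x => ReconAux.Qmap S (s' x)
    have hFQ : ∀ p, F (ReconAux.Qmap S p) = ReconAux.Qmap S' p := fun p =>
      (hrel (s (ReconAux.Qmap S p)) p).mp (Function.surjInv_eq _ _)
    have hGQ : ∀ p, G (ReconAux.Qmap S' p) = ReconAux.Qmap S p := fun p =>
      (hrel (s' (ReconAux.Qmap S' p)) p).mpr (Function.surjInv_eq _ _)
    have hFc : Continuous F :=
      hq.continuous_iff.mpr ((ReconAux.continuous_Qmap S').congr fun p => (hFQ p).symm)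
    have hGc : Continuous G :=
      hq'.continuous_iff.mpr ((ReconAux.continuous_Qmap S).congr fun p => (hGQ p).symm)
    have hGF : ∀ x, G (F x) = x := by
      intro x
      obtain ⟨p, rfl⟩ := ReconAux.surjective_Qmap S x
      rw [hFQ, hGQ]
    have hFG : ∀ x, F (G x) = x := by
      intro x
      obtain ⟨p, rfl⟩ := ReconAux.surjective_Qmap S' x
      rw [hGQ, hFQ]
    refine ⟨⟨⟨F, G, hGF, hFG⟩, hFc, hGc⟩, ⟨?_, ?_⟩, ?_⟩
    · intro γ x
      obtain ⟨p, rfl⟩ := ReconAux.surjective_Qmap S x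
      show F (S.smul γ (ReconAux.Qmap S p)) = S'.smul γ (F (ReconAux.Qmap S p))
      rw [ReconAux.Qmap_smul S γ p, hFQ, hFQ, ← ReconAux.Qmap_smul S' γ p]
    · intro a
      show F (S.sec a) = S'.sec a
      rw [← ReconAux.Qmap_one S a, hFQ, ReconAux.Qmap_one]
    · rintro F' ⟨hsm, hsec⟩ x
      obtain ⟨p, rfl⟩ := ReconAux.surjective_Qmap S x
      show F' (ReconAux.Qmap S p) = F (ReconAux.Qmap S p)
      rw [hFQ]
      calc F' (ReconAux.Qmap S p)
          = F' (S.smul p.1 (S.sec p.2)) := rfl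
        _ = S'.smul p.1 (F' (S.sec p.2)) := hsm p.1 _
        _ = S'.smul p.1 (S'.sec p.2) := by rw [hsec]
end

section
/- Let ℐ be a proper (Γ,A)-groupoid for a topological group Γ, and let G be a compact abelian Lie group. Then the three maps ı: Rep^G(ℐ) → R̄ep^G_cell(ℐ), ȷ: Rep^G_cell(ℐ) → Rep^G(ℐ), and κ: Rep^G_cell(ℐ) → R̄ep^G_cell(ℐ) are all bijective. -/
/-!
Common definitions for formalizing Hambleton–Hausmann, *Equivariant bundles and
isotropy representations*: `(Γ,A)`-groupoids, split `Γ`-spaces, equivariant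
principal `G`-bundles, CW structures, and (cellular) representations.
-/

open Metric Set

/-!
STATEMENT 13 (Proposition 5.3): Let `ℐ` be a proper `(Γ,A)`-groupoid for a
topological group `Γ`, and let `G` be a compact abelian Lie group. Then the three
maps `ı : Rep^G(ℐ) → R̄ep^G_cell(ℐ)`, `ȷ : Rep^G_cell(ℐ) → Rep^G(ℐ)`, and
`κ : Rep^G_cell(ℐ) → R̄ep^G_cell(ℐ)` are all bijective.

Each bijectivity is expressed by the corresponding surjectivity and injectivity
statement on representative families/representations.
-/

open EqvBdl
open scoped Manifold

set_option linter.unusedSectionVars false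

namespace EqvBdlAux

open EqvBdl Metric Set Filter Topology

variable {Γ : Type*} [Group Γ] [TopologicalSpace Γ]
variable {A : Type*} [TopologicalSpace A] [T2Space A]
variable {G : Type*} [CommGroup G] [TopologicalSpace G]
variable (C : CWStruct A) (I : Set (Γ × A))

lemma cellOf_center (e : C.cell) : C.cellOf (C.center e) = e :=
  C.cellOf_charMap e 0 (mem_ball_self one_pos)

lemma slice_eq_cellGrp (hcell : IsCellular C I) (a : A) :
    slice I a = cellGrp C I (C.cellOf a) :=
  hcell.2 a (C.center (C.cellOf a)) (by rw [cellOf_center])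

lemma mem_closedCell_self (a : A) : a ∈ C.closedCell (C.cellOf a) := by
  obtain ⟨x, hx, hxa⟩ := C.charMap_surj a
  exact ⟨x, ball_subset_closedBall hx, hxa⟩

lemma isClosed_closedCell (e : C.cell) : IsClosed (C.closedCell e) :=
  ((isCompact_closedBall _ _).image_of_continuousOn (C.continuousOn_charMap e)).isClosed

lemma face_of_mem_closedCell {e : C.cell} {a : A} (ha : a ∈ C.closedCell e) :
    C.Face (C.cellOf a) e := by
  obtain ⟨x, hx, hxa⟩ := ha
  exact ⟨x, hx, by rw [hxa]⟩

lemma finite_cellOf_image_of_isCompact {K : Set A} (hK : IsCompact K) :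
    (C.cellOf '' K).Finite := by
  have hchoice : ∀ t : ↥(C.cellOf '' K), ∃ a, a ∈ K ∧ C.cellOf a = (t : C.cell) := by
    rintro ⟨t, a, haK, rfl⟩; exact ⟨a, haK, rfl⟩
  choose r hrK hrc using hchoice
  have hclosed : ∀ S : Set A, S ⊆ range r → IsClosed S := by
    intro S hS
    rw [C.weak_topology]
    intro e
    have hfin : (S ∩ C.closedCell e).Finite := by
      apply Set.Finite.of_finite_image (f := C.cellOf)
      · apply (C.closure_finite e).subset
        rintro t ⟨a, ⟨haS, x, hx, rfl⟩, rfl⟩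
        exact ⟨x, hx, rfl⟩
      · rintro a ⟨haS, -⟩ b ⟨hbS, -⟩ hab
        obtain ⟨s, rfl⟩ := hS haS
        obtain ⟨t, rfl⟩ := hS hbS
        rw [hrc s, hrc t] at hab
        exact congrArg r (Subtype.ext hab)
    have hrw : C.charMap e ⁻¹' S ∩ closedBall 0 1 =
        ⋃ a ∈ S ∩ C.closedCell e, (closedBall 0 1 ∩ C.charMap e ⁻¹' {a}) := by
      ext x
      simp only [mem_inter_iff, mem_preimage, mem_iUnion, mem_singleton_iff, exists_prop]
      constructor
      · rintro ⟨hxS, hxB⟩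
        exact ⟨C.charMap e x, ⟨hxS, ⟨x, hxB, rfl⟩⟩, hxB, rfl⟩
      · rintro ⟨a, ⟨haS, -⟩, hxB, h⟩
        exact ⟨h ▸ haS, hxB⟩
    rw [hrw]
    apply hfin.isClosed_biUnion
    intro a _
    exact (C.continuousOn_charMap e).preimage_isClosed_of_isClosed Metric.isClosed_closedBall
      isClosed_singleton
  have hDfin : (range r).Finite := by
    by_contra hinf
    have hinf' : (range r).Infinite := hinf
    have hsubK : range r ⊆ K := by rintro _ ⟨s, rfl⟩; exact hrK s
    obtain ⟨x, -, hacc⟩ := hinf'.exists_accPt_of_subset_isCompact hK hsubK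
    rw [accPt_principal_iff_clusterPt] at hacc
    have h1 : x ∈ closure (range r \ {x}) := mem_closure_iff_clusterPt.mpr hacc
    rw [(hclosed _ diff_subset).closure_eq] at h1
    exact h1.2 rfl
  have himg : C.cellOf '' K = C.cellOf '' (range r) := by
    apply Subset.antisymm
    · rintro t ht
      exact ⟨r ⟨t, ht⟩, mem_range_self _, hrc ⟨t, ht⟩⟩
    · rintro _ ⟨_, ⟨s, rfl⟩, rfl⟩
      rw [hrc s]; exact s.2
  rw [himg]
  exact hDfin.image _

lemma eq_of_locally_const {X B : Type*} [TopologicalSpace X] {s : Set X}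
    (hs : IsPreconnected s) {h : X → B}
    (hloc : ∀ t ∈ s, ∃ O : Set X, IsOpen O ∧ t ∈ O ∧ ∀ u ∈ O ∩ s, h u = h t) :
    ∀ x ∈ s, ∀ y ∈ s, h x = h y := by
  intro x hx y hy
  by_contra hne
  choose! O hOopen hOmem hOconst using hloc
  have hopen1 : IsOpen (⋃ t ∈ {t ∈ s | h t = h x}, O t) :=
    isOpen_biUnion fun t ht => hOopen t ht.1
  have hopen2 : IsOpen (⋃ t ∈ {t ∈ s | h t ≠ h x}, O t) :=
    isOpen_biUnion fun t ht => hOopen t ht.1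
  have hcover : s ⊆ (⋃ t ∈ {t ∈ s | h t = h x}, O t) ∪ ⋃ t ∈ {t ∈ s | h t ≠ h x}, O t := by
    intro t ht
    by_cases hc : h t = h x
    · exact Or.inl (mem_biUnion ⟨ht, hc⟩ (hOmem t ht))
    · exact Or.inr (mem_biUnion ⟨ht, hc⟩ (hOmem t ht))
  obtain ⟨z, hzs, hzu, hzv⟩ := hs _ _ hopen1 hopen2 hcover
    ⟨x, hx, mem_biUnion ⟨hx, rfl⟩ (hOmem x hx)⟩
    ⟨y, hy, mem_biUnion ⟨hy, fun hc => hne hc.symm⟩ (hOmem y hy)⟩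
  obtain ⟨t1, ht1, hz1⟩ := mem_iUnion₂.mp hzu
  obtain ⟨t2, ht2, hz2⟩ := mem_iUnion₂.mp hzv
  have e1 : h z = h t1 := hOconst t1 ht1.1 z ⟨hz1, hzs⟩
  have e2 : h z = h t2 := hOconst t2 ht2.1 z ⟨hz2, hzs⟩
  exact ht2.2 (e2.symm.trans (e1.trans ht1.2))

lemma rep_const_on_cell (hcell : IsCellular C I) {α : Γ × A → G}
    (hmax : RepLocallyMaximal I α) {a : A} {γ : Γ} (hγ : γ ∈ slice I a) :
    α (γ, a) = α (γ, C.center (C.cellOf a)) := by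
  obtain ⟨x, hx, hxa⟩ := C.charMap_surj a
  have key : ∀ z ∈ ball (0 : EuclideanSpace ℝ (Fin (C.dim (C.cellOf a)))) 1,
      ∀ w ∈ ball (0 : EuclideanSpace ℝ (Fin (C.dim (C.cellOf a)))) 1,
      α (γ, C.charMap (C.cellOf a) z) = α (γ, C.charMap (C.cellOf a) w) := by
    apply eq_of_locally_const
      (convex_ball (0 : EuclideanSpace ℝ (Fin (C.dim (C.cellOf a)))) 1).isPreconnected
      (h := fun z => α (γ, C.charMap (C.cellOf a) z))
    intro y hy
    have hcy : C.cellOf (C.charMap (C.cellOf a) y) = C.cellOf a :=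
      C.cellOf_charMap (C.cellOf a) y hy
    obtain ⟨U, hU, hsub, g, hgc, hform⟩ := hmax (C.charMap (C.cellOf a) y)
    have hcont : ContinuousAt (C.charMap (C.cellOf a)) y :=
      (C.continuousOn_charMap (C.cellOf a) y (ball_subset_closedBall hy)).continuousAt
        (mem_nhds_iff.mpr ⟨ball 0 1, ball_subset_closedBall, isOpen_ball, hy⟩)
    obtain ⟨O, hOsub, hOopen, hyO⟩ := _root_.mem_nhds_iff.mp (hcont.preimage_mem_nhds hU)
    refine ⟨O, hOopen, hyO, ?_⟩
    rintro z ⟨hzO, hz⟩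
    have hcz : C.cellOf (C.charMap (C.cellOf a) z) = C.cellOf a :=
      C.cellOf_charMap (C.cellOf a) z hz
    have hγz : γ ∈ slice I (C.charMap (C.cellOf a) z) := by
      rw [hcell.2 (C.charMap (C.cellOf a) z) a (by rw [hcz])]; exact hγ
    have hform' := hform _ (hOsub hzO) γ hγz
    rw [hform', mul_comm (g _), mul_inv_cancel_right]
  have h0 : (0 : EuclideanSpace ℝ (Fin (C.dim (C.cellOf a)))) ∈ ball (0 : _) 1 :=
    mem_ball_self one_pos
  have hkey := key x hx 0 h0
  rw [hxa] at hkey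
  exact hkey

lemma rep_locally_const (hcell : IsCellular C I) {β : C.cell → Γ → G}
    (hcompat : ∀ f e : C.cell, C.Face f e → ∀ γ ∈ cellGrp C I e, β e γ = β f γ)
    (a₀ : A) :
    ∃ U ∈ nhds a₀, (∀ u ∈ U, slice I u ⊆ slice I a₀) ∧
      ∀ u ∈ U, ∀ γ ∈ slice I u, β (C.cellOf u) γ = β (C.cellOf a₀) γ := by
  obtain ⟨U, hUo, ha₀U, -, ρ, hρc, hρmaps, hρ0, hρ1, hρslice⟩ := hcell.1 a₀ univ univ_mem
  have h01 : (1 : ℝ) ∈ Icc (0 : ℝ) 1 := ⟨zero_le_one, le_refl 1⟩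
  have h00 : (0 : ℝ) ∈ Icc (0 : ℝ) 1 := ⟨le_refl 0, zero_le_one⟩
  refine ⟨U, hUo.mem_nhds ha₀U, fun u hu γ hγ => ?_, fun u hu γ hγ => ?_⟩
  · have hh := hρslice 1 h01 u hu hγ
    rwa [hρ1 u hu] at hh
  · set p : ℝ → A := fun t => ρ t u with hp
    have hpc : ContinuousOn p (Icc 0 1) := by
      exact ContinuousOn.comp hρc
        ((continuous_id.prodMk continuous_const).continuousOn)
        (fun t ht => ⟨ht, hu⟩)
    have hγt : ∀ t ∈ Icc (0 : ℝ) 1, γ ∈ slice I (p t) := fun t ht => hρslice t ht u hu hγ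
    have hKc : IsCompact (p '' Icc 0 1) := isCompact_Icc.image_of_continuousOn hpc
    have hF : (C.cellOf '' (p '' Icc 0 1)).Finite := finite_cellOf_image_of_isCompact C hKc
    have key : ∀ s ∈ Icc (0 : ℝ) 1, ∀ t ∈ Icc (0 : ℝ) 1,
        β (C.cellOf (p s)) γ = β (C.cellOf (p t)) γ := by
      apply eq_of_locally_const isPreconnected_Icc
        (h := fun t => β (C.cellOf (p t)) γ)
      intro t ht
      have hWc : IsClosed (⋃ e ∈ {e ∈ C.cellOf '' (p '' Icc 0 1) |
          ¬ C.Face (C.cellOf (p t)) e}, C.closedCell e) :=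
        (hF.sep _).isClosed_biUnion fun e _ => isClosed_closedCell C e
      have hbW : p t ∉ ⋃ e ∈ {e ∈ C.cellOf '' (p '' Icc 0 1) |
          ¬ C.Face (C.cellOf (p t)) e}, C.closedCell e := by
        rw [mem_iUnion₂]
        rintro ⟨e, ⟨-, hne⟩, hmem⟩
        exact hne (face_of_mem_closedCell C hmem)
      have hnh : (⋃ e ∈ {e ∈ C.cellOf '' (p '' Icc 0 1) |
          ¬ C.Face (C.cellOf (p t)) e}, C.closedCell e)ᶜ ∈ nhds (p t) :=
        hWc.isOpen_compl.mem_nhds hbW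
      have hpre : p ⁻¹' (⋃ e ∈ {e ∈ C.cellOf '' (p '' Icc 0 1) |
          ¬ C.Face (C.cellOf (p t)) e}, C.closedCell e)ᶜ ∈ nhdsWithin t (Icc 0 1) :=
        hpc t ht hnh
      obtain ⟨O, hOopen, htO, hOsub⟩ := mem_nhdsWithin.mp hpre
      refine ⟨O, hOopen, htO, ?_⟩
      rintro s ⟨hsO, hs⟩
      have hps : p s ∉ ⋃ e ∈ {e ∈ C.cellOf '' (p '' Icc 0 1) |
          ¬ C.Face (C.cellOf (p t)) e}, C.closedCell e := hOsub ⟨hsO, hs⟩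
      have hmemF : C.cellOf (p s) ∈ C.cellOf '' (p '' Icc 0 1) := ⟨p s, ⟨s, hs, rfl⟩, rfl⟩
      have hface : C.Face (C.cellOf (p t)) (C.cellOf (p s)) := by
        by_contra hnot
        exact hps (mem_biUnion ⟨hmemF, hnot⟩ (mem_closedCell_self C (p s)))
      have hγs : γ ∈ cellGrp C I (C.cellOf (p s)) := by
        rw [← slice_eq_cellGrp C I hcell]; exact hγt s hs
      exact hcompat _ _ hface γ hγs
    have hkey := key 0 h00 1 h01
    rw [show p 0 = u from hρ0 u hu, show p 1 = a₀ from hρ1 u hu] at hkey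
    exact hkey

lemma restrict_face_compat (hcell : IsCellular C I) {α : Γ × A → G}
    (hmax : RepLocallyMaximal I α) {f e : C.cell} (hfe : C.Face f e)
    {γ : Γ} (hγ : γ ∈ cellGrp C I e) :
    α (γ, C.center e) = α (γ, C.center f) := by
  obtain ⟨x, hx, hcf⟩ := hfe
  obtain ⟨U, hU, hsub, g, -, hform⟩ := hmax (C.charMap e x)
  have h01 : (1 : ℝ) ∈ Icc (0 : ℝ) 1 := ⟨zero_le_one, le_refl 1⟩
  have hxnorm : ‖x‖ ≤ 1 := by rwa [← mem_closedBall_zero_iff]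
  have hmapsTo : ∀ t ∈ Icc (0 : ℝ) 1,
      t • x ∈ closedBall (0 : EuclideanSpace ℝ (Fin (C.dim e))) 1 := by
    intro t ht
    rw [mem_closedBall_zero_iff, norm_smul]
    calc ‖t‖ * ‖x‖ ≤ 1 * 1 := by
          apply mul_le_mul ?_ hxnorm (norm_nonneg x) zero_le_one
          rw [Real.norm_eq_abs, abs_le]
          exact ⟨le_trans (by norm_num) ht.1, ht.2⟩
      _ = 1 := one_mul 1
  have hc : ContinuousWithinAt (fun t : ℝ => C.charMap e (t • x)) (Icc 0 1) 1 :=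
    (ContinuousOn.comp (C.continuousOn_charMap e)
      ((continuous_id.smul continuous_const).continuousOn) hmapsTo) 1 h01
  have hc' : Tendsto (fun t : ℝ => C.charMap e (t • x)) (nhdsWithin 1 (Ico (0 : ℝ) 1))
      (nhds (C.charMap e x)) := by
    have hmono := hc.mono Ico_subset_Icc_self
    unfold ContinuousWithinAt at hmono
    simpa only [one_smul] using hmono
  have hne : (nhdsWithin (1 : ℝ) (Ico (0 : ℝ) 1)).NeBot := by
    rw [← mem_closure_iff_nhdsWithin_neBot, closure_Ico (by norm_num : (0 : ℝ) ≠ 1)]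
    exact h01
  obtain ⟨t, htpre, htIco⟩ := ((hc'.eventually_mem hU).and self_mem_nhdsWithin).exists
  have htball : t • x ∈ ball (0 : EuclideanSpace ℝ (Fin (C.dim e))) 1 := by
    rw [mem_ball_zero_iff, norm_smul]
    calc ‖t‖ * ‖x‖ ≤ ‖t‖ * 1 := mul_le_mul_of_nonneg_left hxnorm (norm_nonneg t)
      _ = ‖t‖ := mul_one _
      _ < 1 := by rw [Real.norm_eq_abs, abs_of_nonneg htIco.1]; exact htIco.2
  have hcu : C.cellOf (C.charMap e (t • x)) = e := C.cellOf_charMap e _ htball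
  have hγu : γ ∈ slice I (C.charMap e (t • x)) := by
    rw [hcell.2 (C.charMap e (t • x)) (C.center e) (by rw [hcu, cellOf_center])]
    exact hγ
  have hγb : γ ∈ slice I (C.charMap e x) := hsub _ htpre hγu
  have h1 : α (γ, C.charMap e (t • x)) = α (γ, C.charMap e x) := by
    have hf' := hform _ htpre γ hγu
    rw [hf', mul_comm (g _), mul_inv_cancel_right]
  have h2 : α (γ, C.charMap e (t • x)) = α (γ, C.center e) := by
    have hcc := rep_const_on_cell C I hcell hmax hγu
    rwa [hcu] at hcc
  have h3 : α (γ, C.charMap e x) = α (γ, C.center f) := by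
    have hcc := rep_const_on_cell C I hcell hmax hγb
    rwa [hcf] at hcc
  rw [← h2, h1, h3]

end EqvBdlAux
theorem iota_jmath_kappa_bijective_abelian
    {Γ : Type*} [Group Γ] [TopologicalSpace Γ] [IsTopologicalGroup Γ]
    {A : Type*} [TopologicalSpace A] [T2Space A] (C : CWStruct A)
    (I : Set (Γ × A)) (hI : IsProper C I)
    {EG : Type*} [NormedAddCommGroup EG] [NormedSpace ℝ EG] [FiniteDimensional ℝ EG]
    {G : Type*} [TopologicalSpace G] [ChartedSpace EG G] [CommGroup G]
    [IsTopologicalGroup G] [LieGroup (𝓘(ℝ, EG)) (⊤ : ℕ∞) G] [CompactSpace G] :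
    -- ı is surjective
    (∀ β : C.cell → Γ → G, IsBarCellRep C I β →
      ∃ α : Γ × A → G, IsContRep I α ∧ RepLocallyMaximal I α ∧ BarMatches C I α β) ∧
    -- ı is injective
    (∀ α α' : Γ × A → G,
      IsContRep I α → RepLocallyMaximal I α → IsContRep I α' → RepLocallyMaximal I α' →
      (∀ e : C.cell, ConjOn (cellGrp C I e) (restrictAt C α e) (restrictAt C α' e)) →
      RepConj I α α') ∧
    -- ȷ is surjective
    (∀ α : Γ × A → G, IsContRep I α → RepLocallyMaximal I α →
      ∃ β : C.cell → Γ → G, IsCellRep C I β ∧ RepConj I (toRep C β) α) ∧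
    -- ȷ is injective
    (∀ β β' : C.cell → Γ → G, IsCellRep C I β → IsCellRep C I β' →
      RepConj I (toRep C β) (toRep C β') →
      ∃ g : G, ∀ e : C.cell, ∀ γ ∈ cellGrp C I e, β' e γ = g⁻¹ * β e γ * g) ∧
    -- κ is surjective
    (∀ β : C.cell → Γ → G, IsBarCellRep C I β →
      ∃ β' : C.cell → Γ → G, IsCellRep C I β' ∧
        ∀ e : C.cell, ConjOn (cellGrp C I e) (β' e) (β e)) ∧
    -- κ is injective
    (∀ β β' : C.cell → Γ → G, IsCellRep C I β → IsCellRep C I β' →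
      (∀ e : C.cell, ConjOn (cellGrp C I e) (β e) (β' e)) →
      ∃ g : G, ∀ e : C.cell, ∀ γ ∈ cellGrp C I e, β' e γ = g⁻¹ * β e γ * g) := by
  obtain ⟨-, hcell, -⟩ := hI
  have conjTriv : ∀ (x g : G), g⁻¹ * x * g = x := fun x g => by
    rw [mul_comm g⁻¹, inv_mul_cancel_right]
  have barToCell : ∀ β : C.cell → Γ → G, IsBarCellRep C I β → IsCellRep C I β := by
    intro β hβ
    refine ⟨hβ.hom, ?_⟩
    intro f e hfe γ hγ
    obtain ⟨g, hg⟩ := hβ.compat f e hfe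
    rw [hg γ hγ, conjTriv]
  have mainCont : ∀ β : C.cell → Γ → G, IsCellRep C I β →
      IsContRep I (toRep C β) ∧ RepLocallyMaximal I (toRep C β) := by
    intro β hβ
    constructor
    · constructor
      · rintro ⟨γ₀, a₀⟩ hq₀
        obtain ⟨U, hU, hsub, hconst⟩ :=
          EqvBdlAux.rep_locally_const C I hcell hβ.compat a₀
        have ha₀U : a₀ ∈ U := mem_of_mem_nhds hU
        have hγ₀ : γ₀ ∈ slice I a₀ := hq₀
        have hγ₀' : γ₀ ∈ cellGrp C I (C.cellOf a₀) := by
          rw [← EqvBdlAux.slice_eq_cellGrp C I hcell]; exact hγ₀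
        rw [← continuousWithinAt_inter
          (prod_mem_nhds Filter.univ_mem hU : (univ ×ˢ U : Set (Γ × A)) ∈ nhds (γ₀, a₀))]
        apply ContinuousWithinAt.congr
          (f := fun q : Γ × A => β (C.cellOf a₀) q.1)
        · exact ContinuousWithinAt.comp ((hβ.hom (C.cellOf a₀)).cont γ₀ hγ₀')
            (continuous_fst.continuousWithinAt)
            (fun q hq => by
              have h1 : q.1 ∈ slice I q.2 := hq.1
              have h2 := hsub q.2 hq.2.2 h1
              rw [← EqvBdlAux.slice_eq_cellGrp C I hcell]; exact h2)
        · rintro ⟨γ, a⟩ ⟨hqI, -, haU⟩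
          exact hconst a haU γ hqI
        · exact hconst a₀ ha₀U γ₀ hγ₀
      · intro a γ hγ δ hδ
        have hγ' : γ ∈ cellGrp C I (C.cellOf a) := by
          rw [← EqvBdlAux.slice_eq_cellGrp C I hcell]; exact hγ
        have hδ' : δ ∈ cellGrp C I (C.cellOf a) := by
          rw [← EqvBdlAux.slice_eq_cellGrp C I hcell]; exact hδ
        exact (hβ.hom (C.cellOf a)).map_mul γ hγ' δ hδ'
    · intro a
      obtain ⟨U, hU, hsub, hconst⟩ :=
        EqvBdlAux.rep_locally_const C I hcell hβ.compat a
      refine ⟨U, hU, hsub, fun _ => 1, continuousOn_const, ?_⟩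
      intro u hu γ hγ
      show β (C.cellOf u) γ = 1 * β (C.cellOf a) γ * 1⁻¹
      rw [one_mul, inv_one, mul_one]
      exact hconst u hu γ hγ
  refine ⟨?_, ?_, ?_, ?_, ?_, ?_⟩
  · -- ı surjective
    intro β hβ
    have hc := barToCell β hβ
    obtain ⟨hcont, hmax⟩ := mainCont β hc
    refine ⟨toRep C β, hcont, hmax, ?_⟩
    intro e
    refine ⟨1, fun γ hγ => ?_⟩
    rw [conjTriv]
    show β e γ = β (C.cellOf (C.center e)) γ
    rw [EqvBdlAux.cellOf_center]
  · -- ı injective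
    intro α α' hα hαm hα' hα'm hconj
    refine ⟨fun _ => 1, continuous_const, ?_⟩
    rintro ⟨γ, a⟩ hq
    have hγ : γ ∈ slice I a := hq
    have hγc : γ ∈ cellGrp C I (C.cellOf a) := by
      rw [← EqvBdlAux.slice_eq_cellGrp C I hcell]; exact hγ
    obtain ⟨g, hg⟩ := hconj (C.cellOf a)
    have h1 := EqvBdlAux.rep_const_on_cell C I hcell hαm hγ
    have h2 := EqvBdlAux.rep_const_on_cell C I hcell hα'm hγ
    have h4 : α' (γ, C.center (C.cellOf a)) = α (γ, C.center (C.cellOf a)) := by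
      have h3 := hg γ hγc
      rw [conjTriv] at h3
      exact h3
    show α' (γ, a) = (1 : G)⁻¹ * α (γ, a) * 1
    rw [conjTriv, h1, h2, h4]
  · -- ȷ surjective
    intro α hα hαm
    refine ⟨fun e γ => α (γ, C.center e), ⟨?_, ?_⟩, fun _ => 1, continuous_const, ?_⟩
    · intro e
      constructor
      · exact ContinuousOn.comp hα.cont
          ((continuous_id.prodMk continuous_const).continuousOn)
          (fun γ hγ => hγ)
      · intro γ hγ δ hδ
        exact hα.map_mul (C.center e) γ hγ δ hδ
    · intro f e hfe γ hγ
      exact EqvBdlAux.restrict_face_compat C I hcell hαm hfe hγ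
    · rintro ⟨γ, a⟩ hq
      show α (γ, a) = (1 : G)⁻¹ * α (γ, C.center (C.cellOf a)) * 1
      rw [conjTriv]
      exact EqvBdlAux.rep_const_on_cell C I hcell hαm hq
  · -- ȷ injective
    intro β β' hβ hβ' hconj
    obtain ⟨ψ, -, hψ⟩ := hconj
    refine ⟨1, fun e γ hγ => ?_⟩
    rw [conjTriv]
    have hq : ((γ, C.center e) : Γ × A) ∈ I := hγ
    have h1 := hψ (γ, C.center e) hq
    rw [conjTriv] at h1
    have h2 : β' (C.cellOf (C.center e)) γ = β (C.cellOf (C.center e)) γ := h1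
    rwa [EqvBdlAux.cellOf_center] at h2
  · -- κ surjective
    intro β hβ
    refine ⟨β, barToCell β hβ, fun e => ⟨1, fun γ hγ => ?_⟩⟩
    rw [conjTriv]
  · -- κ injective
    intro β β' hβ hβ' hconj
    refine ⟨1, fun e γ hγ => ?_⟩
    rw [conjTriv]
    obtain ⟨g, hg⟩ := hconj e
    rw [hg γ hγ, conjTriv]
end

section
/- Let ℐ be a cellular (Γ,A)-groupoid where Γ is a topological group and A is a graph, and let G be a path-connected topological group. Then the map ı: Rep^G(ℐ) → R̄ep^G_cell(ℐ) is surjective. -/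
/-!
Common definitions for formalizing Hambleton–Hausmann, *Equivariant bundles and
isotropy representations*: `(Γ,A)`-groupoids, split `Γ`-spaces, equivariant
principal `G`-bundles, CW structures, and (cellular) representations.
-/

open Metric Set

/-!
STATEMENT 16 (Lemma 5.8): Let `ℐ` be a cellular `(Γ,A)`-groupoid where `Γ` is a
topological group and `A` is a graph (1-dimensional CW-complex), and let `G` be a
path-connected topological group. Then the map `ı : Rep^G(ℐ) → R̄ep^G_cell(ℐ)` is
surjective: every compatible-up-to-conjugacy family of homomorphisms on the vertex
and edge groups is realized, up to cell-wise conjugacy, by the restrictions of some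
(locally maximal) continuous representation of `ℐ` in `G`.
-/

open EqvBdl

namespace IotaSurjAux

set_option linter.unusedSectionVars false

section Fin1

variable {n : ℕ}

/-- The constant vector with all coordinates `s`. -/
def unitv (n : ℕ) (s : ℝ) : EuclideanSpace ℝ (Fin n) := WithLp.toLp 2 (fun _ => s)

lemma euclid_eq_zero (h : n = 0) (x y : EuclideanSpace ℝ (Fin n)) : x = y :=
  PiLp.ext fun i => absurd i.isLt (by omega)

lemma norm_eq_abs (h : n = 1) (x : EuclideanSpace ℝ (Fin n)) : ‖x‖ = |∑ i, x i| := by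
  subst h
  rw [EuclideanSpace.norm_eq, Fin.sum_univ_one, Fin.sum_univ_one, Real.norm_eq_abs,
    Real.sqrt_sq_eq_abs, abs_abs]

lemma eq_unitv (h : n = 1) (x : EuclideanSpace ℝ (Fin n)) : x = unitv n (∑ i, x i) := by
  subst h
  apply PiLp.ext; intro i
  have hi : i = 0 := Subsingleton.elim _ _
  rw [hi]
  show x 0 = ∑ i, x i
  rw [Fin.sum_univ_one]

lemma sum_unitv (h : n = 1) (s : ℝ) : ∑ i, unitv n s i = s := by
  subst h; exact Fin.sum_univ_one _

lemma norm_unitv (h : n = 1) (s : ℝ) : ‖unitv n s‖ = |s| := by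
  rw [norm_eq_abs h, sum_unitv h]

lemma sphere_cases (h : n = 1) (x : EuclideanSpace ℝ (Fin n)) (hx : ‖x‖ = 1) :
    ((∑ i, x i) = 1 ∧ x = unitv n 1) ∨ ((∑ i, x i) = -1 ∧ x = unitv n (-1)) := by
  rw [norm_eq_abs h] at hx
  rcases abs_eq (by norm_num : (0:ℝ) ≤ 1) |>.mp hx with h1 | h1
  · exact Or.inl ⟨h1, by rw [← h1]; exact eq_unitv h x⟩
  · exact Or.inr ⟨h1, by rw [← h1]; exact eq_unitv h x⟩

end Fin1

section CW

variable {A : Type*} [TopologicalSpace A] (C : CWStruct A)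

noncomputable def pt (a : A) : EuclideanSpace ℝ (Fin (C.dim (C.cellOf a))) :=
  Classical.choose (C.charMap_surj a)

lemma pt_mem (a : A) : pt C a ∈ ball 0 1 := (Classical.choose_spec (C.charMap_surj a)).1

lemma charMap_pt (a : A) : C.charMap (C.cellOf a) (pt C a) = a :=
  (Classical.choose_spec (C.charMap_surj a)).2

/-- The coordinate parameter of a point (sum of coordinates of its preimage). -/
noncomputable def tpar (a : A) : ℝ := ∑ i, pt C a i

lemma cellOf_center (e : C.cell) : C.cellOf (C.center e) = e :=
  C.cellOf_charMap e 0 (mem_ball_self one_pos)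

lemma tpar_eq (a : A) (e : C.cell) (he : C.cellOf a = e)
    (x : EuclideanSpace ℝ (Fin (C.dim e))) (hx : x ∈ ball 0 1)
    (hax : C.charMap e x = a) : tpar C a = ∑ i, x i := by
  subst he
  have hpx : pt C a = x :=
    C.injOn_ball (C.cellOf a) (pt_mem C a) hx (by rw [charMap_pt, hax])
  rw [tpar, hpx]

lemma tpar_charMap (e : C.cell) (x : EuclideanSpace ℝ (Fin (C.dim e)))
    (hx : x ∈ ball 0 1) : tpar C (C.charMap e x) = ∑ i, x i :=
  tpar_eq C _ e (C.cellOf_charMap e x hx) x hx rfl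

lemma vertex_eq (a : A) (e : C.cell) (he : C.cellOf a = e) (h0 : C.dim e = 0) :
    a = C.center e := by
  subst he
  have h := charMap_pt C a
  have hz : pt C a = 0 := euclid_eq_zero h0 _ _
  rw [hz] at h
  exact h.symm

lemma tpar_center (e : C.cell) : tpar C (C.center e) = 0 := by
  rw [CWStruct.center, tpar_charMap C e 0 (mem_ball_self one_pos)]
  exact Finset.sum_eq_zero fun i _ => rfl

lemma isOpen_of_rel (s : Set A)
    (h : ∀ f : C.cell, ∃ O : Set (EuclideanSpace ℝ (Fin (C.dim f))), IsOpen O ∧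
      C.charMap f ⁻¹' s ∩ closedBall 0 1 = O ∩ closedBall 0 1) : IsOpen s := by
  rw [← isClosed_compl_iff, C.weak_topology]
  intro f
  obtain ⟨O, hO, heq⟩ := h f
  have hset : C.charMap f ⁻¹' sᶜ ∩ closedBall 0 1 = closedBall 0 1 \ O := by
    ext x
    simp only [mem_inter_iff, mem_preimage, mem_compl_iff, mem_diff]
    constructor
    · rintro ⟨hxs, hxb⟩
      refine ⟨hxb, fun hxO => hxs ?_⟩
      have hx : x ∈ O ∩ closedBall 0 1 := ⟨hxO, hxb⟩
      rw [← heq] at hx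
      exact hx.1
    · rintro ⟨hxb, hxO⟩
      refine ⟨fun hxs => hxO ?_, hxb⟩
      have hx : x ∈ C.charMap f ⁻¹' s ∩ closedBall 0 1 := ⟨hxs, hxb⟩
      rw [heq] at hx
      exact hx.1
  rw [hset]
  exact Metric.isClosed_closedBall.sdiff hO

lemma cb_cases (f : C.cell) (x : EuclideanSpace ℝ (Fin (C.dim f)))
    (hx : x ∈ closedBall 0 1) : x ∈ ball 0 1 ∨ ‖x‖ = 1 := by
  rw [mem_closedBall_zero_iff] at hx
  rcases lt_or_eq_of_le hx with h | h
  · exact Or.inl (mem_ball_zero_iff.mpr h)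
  · exact Or.inr h

lemma sphere_vertex (f : C.cell) (h1 : C.dim f = 1)
    (x : EuclideanSpace ℝ (Fin (C.dim f))) (hx : ‖x‖ = 1) :
    C.dim (C.cellOf (C.charMap f x)) = 0 ∧
      C.charMap f x = C.center (C.cellOf (C.charMap f x)) := by
  have hs : x ∈ sphere (0 : EuclideanSpace ℝ (Fin (C.dim f))) 1 :=
    mem_sphere_zero_iff_norm.mpr hx
  have hd := C.sphere_dim_lt f x hs
  have h0 : C.dim (C.cellOf (C.charMap f x)) = 0 := by omega
  exact ⟨h0, vertex_eq C _ _ rfl h0⟩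

lemma isOpen_cellSet (hgraph : C.IsGraph) (e : C.cell) (h1 : C.dim e = 1) :
    IsOpen {a | C.cellOf a = e} := by
  apply isOpen_of_rel
  intro f
  by_cases hf : f = e
  · subst hf
    refine ⟨ball 0 1, isOpen_ball, ?_⟩
    ext x
    simp only [mem_inter_iff, mem_preimage, mem_setOf_eq]
    constructor
    · rintro ⟨hce, hcb⟩
      refine ⟨?_, hcb⟩
      rcases cb_cases C f x hcb with h | h
      · exact h
      · exfalso
        have hd := (sphere_vertex C f h1 x h).1
        rw [hce] at hd
        omega
    · rintro ⟨hb, hcb⟩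
      exact ⟨C.cellOf_charMap f x hb, hcb⟩
  · refine ⟨∅, isOpen_empty, ?_⟩
    ext x
    simp only [mem_inter_iff, mem_preimage, mem_setOf_eq, mem_empty_iff_false, false_and,
      iff_false, not_and]
    intro hce hcb
    rcases cb_cases C f x hcb with h | h
    · exact hf (by rw [← hce, C.cellOf_charMap f x h])
    · rcases (by have := hgraph f; omega : C.dim f = 0 ∨ C.dim f = 1) with h0 | hf1
      · have hz : x = 0 := euclid_eq_zero h0 x 0
        rw [hz, norm_zero] at h
        norm_num at h
      · have hd := (sphere_vertex C f hf1 x h).1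
        rw [hce] at hd
        omega

lemma continuous_sum : Continuous fun x : EuclideanSpace ℝ (Fin n) => ∑ i, x i :=
  continuous_finset_sum _ fun i _ => (EuclideanSpace.proj i).continuous

lemma isOpen_tpar_preimage (hgraph : C.IsGraph) (e : C.cell) (h1 : C.dim e = 1)
    (J : Set ℝ) (hJ : IsOpen J) :
    IsOpen {a | C.cellOf a = e ∧ tpar C a ∈ J} := by
  apply isOpen_of_rel
  intro f
  by_cases hf : f = e
  · subst hf
    refine ⟨ball 0 1 ∩ {x | (∑ i, x i) ∈ J}, isOpen_ball.inter (hJ.preimage (continuous_sum)), ?_⟩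
    ext x
    simp only [mem_inter_iff, mem_preimage, mem_setOf_eq]
    constructor
    · rintro ⟨⟨hce, htJ⟩, hcb⟩
      have hb : x ∈ ball 0 1 := by
        rcases cb_cases C f x hcb with h | h
        · exact h
        · exfalso
          have hd := (sphere_vertex C f h1 x h).1
          rw [hce] at hd
          omega
      refine ⟨⟨hb, ?_⟩, hcb⟩
      rwa [tpar_charMap C f x hb] at htJ
    · rintro ⟨⟨hb, hsJ⟩, hcb⟩
      exact ⟨⟨C.cellOf_charMap f x hb, by rwa [tpar_charMap C f x hb]⟩, hcb⟩
  · refine ⟨∅, isOpen_empty, ?_⟩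
    ext x
    simp only [mem_inter_iff, mem_preimage, mem_setOf_eq, mem_empty_iff_false, false_and,
      iff_false, not_and]
    rintro ⟨hce, _⟩ hcb
    rcases cb_cases C f x hcb with h | h
    · exact hf (by rw [← hce, C.cellOf_charMap f x h])
    · rcases (by have := hgraph f; omega : C.dim f = 0 ∨ C.dim f = 1) with h0 | hf1
      · have hz : x = 0 := euclid_eq_zero h0 x 0
        rw [hz, norm_zero] at h
        norm_num at h
      · have hd := (sphere_vertex C f hf1 x h).1
        rw [hce] at hd
        omega

lemma tpar_contOn (hgraph : C.IsGraph) (e : C.cell) (h1 : C.dim e = 1) :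
    ContinuousOn (tpar C) {a | C.cellOf a = e} := by
  intro a ha
  rw [ContinuousWithinAt, Filter.tendsto_def]
  intro s hs
  obtain ⟨J, hJs, hJo, haJ⟩ := _root_.mem_nhds_iff.mp hs
  refine mem_nhdsWithin.mpr ⟨{b | C.cellOf b = e ∧ tpar C b ∈ J},
    isOpen_tpar_preimage C hgraph e h1 J hJo, ⟨ha, haJ⟩, fun u hu => hJs hu.1.2⟩

variable {G : Type*} [Group G] [TopologicalSpace G] [IsTopologicalGroup G]
  [PathConnectedSpace G]

/-- The vertex of a 1-cell `e` at the end `s = ±1`. -/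
noncomputable def vtx (e : C.cell) (s : ℝ) : C.cell :=
  C.cellOf (C.charMap e (unitv _ s))

/-- A path of conjugators along the 1-cell `e`: equal to `1` in the middle,
approaching the chosen conjugators at the two ends. -/
noncomputable def qp (gc : C.cell → C.cell → G) (e : C.cell) (t : ℝ) : G :=
  if t ≤ 0 then (PathConnectedSpace.somePath 1 (gc (vtx C e (-1)) e)).extend (-4*t - 3)
  else (PathConnectedSpace.somePath 1 (gc (vtx C e 1) e)).extend (4*t - 3)

lemma qp_continuous (gc : C.cell → C.cell → G) (e : C.cell) :
    Continuous (qp C gc e) := by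
  apply Continuous.if_le
  · exact (Path.continuous_extend _).comp (by continuity)
  · exact (Path.continuous_extend _).comp (by continuity)
  · exact continuous_id
  · exact continuous_const
  · intro t ht
    change t = 0 at ht
    subst ht
    rw [Path.extend_of_le_zero _ (by norm_num), Path.extend_of_le_zero _ (by norm_num)]

lemma qp_zero (gc : C.cell → C.cell → G) (e : C.cell) : qp C gc e 0 = 1 := by
  rw [qp, if_pos le_rfl, Path.extend_of_le_zero _ (by norm_num)]

lemma qp_one (gc : C.cell → C.cell → G) (e : C.cell) :
    qp C gc e 1 = gc (vtx C e 1) e := by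
  rw [qp, if_neg (by norm_num), show (4:ℝ)*1 - 3 = 1 by norm_num, Path.extend_one]

lemma qp_neg_one (gc : C.cell → C.cell → G) (e : C.cell) :
    qp C gc e (-1) = gc (vtx C e (-1)) e := by
  rw [qp, if_pos (by norm_num), show (-4:ℝ)*(-1) - 3 = 1 by norm_num, Path.extend_one]

variable {Γ : Type*} [Group Γ] [TopologicalSpace Γ]

/-- The representation built from the cellwise family `β` and conjugators `gc`. -/
noncomputable def alph (β : C.cell → Γ → G) (gc : C.cell → C.cell → G) : Γ × A → G :=
  fun p => qp C gc (C.cellOf p.2) (tpar C p.2) * β (C.cellOf p.2) p.1 *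
    (qp C gc (C.cellOf p.2) (tpar C p.2))⁻¹

lemma alph_eq (β : C.cell → Γ → G) (gc : C.cell → C.cell → G) (γ : Γ) (a : A)
    (e : C.cell) (he : C.cellOf a = e) :
    alph C β gc (γ, a) =
      qp C gc e (tpar C a) * β e γ * (qp C gc e (tpar C a))⁻¹ := by
  simp [alph, he]

lemma alph_center (β : C.cell → Γ → G) (gc : C.cell → C.cell → G) (γ : Γ) (e : C.cell) :
    alph C β gc (γ, C.center e) = β e γ := by
  rw [alph_eq C β gc γ _ e (cellOf_center C e), tpar_center, qp_zero]
  simp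

lemma alph_vertex (β : C.cell → Γ → G) (gc : C.cell → C.cell → G) (γ : Γ) (a : A)
    (e : C.cell) (he : C.cellOf a = e) (h0 : C.dim e = 0) :
    alph C β gc (γ, a) = β e γ := by
  rw [vertex_eq C a e he h0]
  exact alph_center C β gc γ e

/-- The main neighbourhood construction at a vertex `v`: an open neighbourhood of
the vertex, contained in `U'`, whose non-vertex points lie on 1-cells having `v`
as a face, with the conjugator discrepancy lying in `N`. -/
lemma vnbhd (hgraph : C.IsGraph) (gc : C.cell → C.cell → G) (v : C.cell)
    (h0 : C.dim v = 0) (N : Set G) (hN : IsOpen N) (h1N : (1:G) ∈ N)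
    (U' : Set A) (hU' : IsOpen U') (hvU' : C.center v ∈ U') :
    ∃ V : Set A, IsOpen V ∧ C.center v ∈ V ∧ V ⊆ U' ∧
      ∀ a ∈ V, a = C.center v ∨
        (C.dim (C.cellOf a) = 1 ∧ C.Face v (C.cellOf a) ∧
          qp C gc (C.cellOf a) (tpar C a) * (gc v (C.cellOf a))⁻¹ ∈ N) := by
  classical
  set Ec : A → Prop := fun a =>
    C.dim (C.cellOf a) = 1 ∧
    ((0 < tpar C a ∧ vtx C (C.cellOf a) 1 = v) ∨
      (tpar C a < 0 ∧ vtx C (C.cellOf a) (-1) = v)) ∧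
    qp C gc (C.cellOf a) (tpar C a) * (gc v (C.cellOf a))⁻¹ ∈ N with hEc
  refine ⟨U' ∩ {a | C.cellOf a = v ∨ Ec a}, ?_, ⟨hvU', Or.inl (cellOf_center C v)⟩,
    inter_subset_left, ?_⟩
  · -- openness
    apply isOpen_of_rel
    intro f
    obtain ⟨OU, hOU, hOUeq⟩ :=
      (continuousOn_iff'.mp (C.continuousOn_charMap f)) U' hU'
    rcases (by have := hgraph f; omega : C.dim f = 0 ∨ C.dim f = 1) with hf0 | hf1
    · -- 0-cells: the preimage is constant
      by_cases hmem : C.charMap f 0 ∈ U' ∩ {a | C.cellOf a = v ∨ Ec a}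
      · refine ⟨univ, isOpen_univ, ?_⟩
        ext x
        simp only [mem_inter_iff, mem_preimage, univ_inter, mem_univ, true_and]
        constructor
        · rintro ⟨-, hcb⟩
          exact hcb
        · intro hcb
          refine ⟨?_, hcb⟩
          rw [euclid_eq_zero hf0 x 0]
          exact hmem
      · refine ⟨∅, isOpen_empty, ?_⟩
        ext x
        simp only [mem_inter_iff, mem_preimage, mem_empty_iff_false, false_and, iff_false,
          not_and]
        intro hx _
        rw [euclid_eq_zero hf0 x 0] at hx
        exact hmem hx
    · -- 1-cells
      set T : Set (EuclideanSpace ℝ (Fin (C.dim f))) :=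
        (fun x => ∑ i, x i) ⁻¹'
          {t : ℝ | (0 < t ∧ vtx C f 1 = v ∧ qp C gc f t * (gc v f)⁻¹ ∈ N) ∨
            (t < 0 ∧ vtx C f (-1) = v ∧ qp C gc f t * (gc v f)⁻¹ ∈ N)} with hT
      have hTopen : IsOpen T := by
        apply IsOpen.preimage continuous_sum
        rw [setOf_or]
        apply IsOpen.union
        · by_cases hv1 : vtx C f 1 = v
          · have : {t : ℝ | 0 < t ∧ vtx C f 1 = v ∧ qp C gc f t * (gc v f)⁻¹ ∈ N} =
                {t : ℝ | 0 < t} ∩ (fun t => qp C gc f t * (gc v f)⁻¹) ⁻¹' N := by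
              ext t; simp [hv1, and_assoc]
            rw [this]
            exact (isOpen_lt continuous_const continuous_id).inter
              (hN.preimage ((qp_continuous C gc f).mul continuous_const))
          · have : {t : ℝ | 0 < t ∧ vtx C f 1 = v ∧ qp C gc f t * (gc v f)⁻¹ ∈ N} =
                (∅ : Set ℝ) := by
              ext t; simp [hv1]
            rw [this]; exact isOpen_empty
        · by_cases hv1 : vtx C f (-1) = v
          · have : {t : ℝ | t < 0 ∧ vtx C f (-1) = v ∧ qp C gc f t * (gc v f)⁻¹ ∈ N} =
                {t : ℝ | t < 0} ∩ (fun t => qp C gc f t * (gc v f)⁻¹) ⁻¹' N := by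
              ext t; simp [hv1, and_assoc]
            rw [this]
            exact (isOpen_lt continuous_id continuous_const).inter
              (hN.preimage ((qp_continuous C gc f).mul continuous_const))
          · have : {t : ℝ | t < 0 ∧ vtx C f (-1) = v ∧ qp C gc f t * (gc v f)⁻¹ ∈ N} =
                (∅ : Set ℝ) := by
              ext t; simp [hv1]
            rw [this]; exact isOpen_empty
      refine ⟨OU ∩ T, hOU.inter hTopen, ?_⟩
      ext x
      simp only [mem_inter_iff, mem_preimage, mem_setOf_eq]
      constructor
      · rintro ⟨⟨hxU', hor⟩, hcb⟩
        have hxOU : x ∈ OU := ((Set.ext_iff.mp hOUeq x).mp ⟨hxU', hcb⟩).1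
        refine ⟨⟨hxOU, ?_⟩, hcb⟩
        show (0 < ∑ i, x i ∧ vtx C f 1 = v ∧ qp C gc f (∑ i, x i) * (gc v f)⁻¹ ∈ N) ∨
          ((∑ i, x i) < 0 ∧ vtx C f (-1) = v ∧ qp C gc f (∑ i, x i) * (gc v f)⁻¹ ∈ N)
        rcases cb_cases C f x hcb with hb | hsph
        · -- interior point of the 1-cell
          have hcf : C.cellOf (C.charMap f x) = f := C.cellOf_charMap f x hb
          have htp : tpar C (C.charMap f x) = ∑ i, x i := tpar_charMap C f x hb
          rcases hor with hv | hEca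
          · exfalso
            rw [hcf] at hv
            rw [hv] at hf1
            omega
          · obtain ⟨-, hside, hq⟩ := hEca
            rw [hcf, htp] at hside hq
            rcases hside with ⟨hpos, hs⟩ | ⟨hneg, hs⟩
            · exact Or.inl ⟨hpos, hs, hq⟩
            · exact Or.inr ⟨hneg, hs, hq⟩
        · -- endpoint
          obtain ⟨hw0, hwc⟩ := sphere_vertex C f hf1 x hsph
          have hvv : C.cellOf (C.charMap f x) = v := by
            rcases hor with hv | hEca
            · exact hv
            · exact absurd hEca.1 (by omega)
          rcases sphere_cases hf1 x hsph with ⟨hs1, hxu⟩ | ⟨hs1, hxu⟩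
          · have hvtx : vtx C f 1 = v := by rw [vtx, ← hxu]; exact hvv
            refine Or.inl ⟨by rw [hs1]; norm_num, hvtx, ?_⟩
            rw [hs1, qp_one, hvtx]
            simpa using h1N
          · have hvtx : vtx C f (-1) = v := by rw [vtx, ← hxu]; exact hvv
            refine Or.inr ⟨by rw [hs1]; norm_num, hvtx, ?_⟩
            rw [hs1, qp_neg_one, hvtx]
            simpa using h1N
      · rintro ⟨⟨hxOU, hxT0⟩, hcb⟩
        have hxT : (0 < ∑ i, x i ∧ vtx C f 1 = v ∧ qp C gc f (∑ i, x i) * (gc v f)⁻¹ ∈ N) ∨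
            ((∑ i, x i) < 0 ∧ vtx C f (-1) = v ∧ qp C gc f (∑ i, x i) * (gc v f)⁻¹ ∈ N) := hxT0
        have hxU' : C.charMap f x ∈ U' := ((Set.ext_iff.mp hOUeq x).mpr ⟨hxOU, hcb⟩).1
        refine ⟨⟨hxU', ?_⟩, hcb⟩
        rcases cb_cases C f x hcb with hb | hsph
        · -- interior point
          have hcf : C.cellOf (C.charMap f x) = f := C.cellOf_charMap f x hb
          have htp : tpar C (C.charMap f x) = ∑ i, x i := tpar_charMap C f x hb
          right
          refine ⟨by rw [hcf]; exact hf1, ?_, ?_⟩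
          · rw [hcf, htp]
            rcases hxT with ⟨hpos, hs, hq⟩ | ⟨hneg, hs, hq⟩
            · exact Or.inl ⟨hpos, hs⟩
            · exact Or.inr ⟨hneg, hs⟩
          · rw [hcf, htp]
            rcases hxT with ⟨-, -, hq⟩ | ⟨-, -, hq⟩ <;> exact hq
        · -- endpoint
          left
          rcases sphere_cases hf1 x hsph with ⟨hs1, hxu⟩ | ⟨hs1, hxu⟩
          · rcases hxT with ⟨-, hs, -⟩ | ⟨hneg, -, -⟩
            · rw [hxu]; exact hs
            · rw [hs1] at hneg; norm_num at hneg
          · rcases hxT with ⟨hpos, -, -⟩ | ⟨-, hs, -⟩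
            · rw [hs1] at hpos; norm_num at hpos
            · rw [hxu]; exact hs
  · -- the pointwise description
    rintro a ⟨-, hor⟩
    rcases hor with hv | hEca
    · exact Or.inl (vertex_eq C a v hv h0)
    · obtain ⟨hd1, hside, hq⟩ := hEca
      refine Or.inr ⟨hd1, ?_, hq⟩
      rcases hside with ⟨-, hs⟩ | ⟨-, hs⟩
      · exact ⟨unitv _ 1, mem_closedBall_zero_iff.mpr (by rw [norm_unitv hd1]; norm_num), hs⟩
      · exact ⟨unitv _ (-1), mem_closedBall_zero_iff.mpr (by rw [norm_unitv hd1]; norm_num), hs⟩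

end CW

end IotaSurjAux

theorem iota_surjective_on_graph
    {Γ : Type*} [Group Γ] [TopologicalSpace Γ] [IsTopologicalGroup Γ]
    {A : Type*} [TopologicalSpace A] (C : CWStruct A) (hgraph : C.IsGraph)
    (I : Set (Γ × A)) (hI : IsGAGroupoid I) (hcell : IsCellular C I)
    {G : Type*} [Group G] [TopologicalSpace G] [IsTopologicalGroup G]
    [PathConnectedSpace G] :
    ∀ β : C.cell → Γ → G, IsBarCellRep C I β →
      ∃ α : Γ × A → G, IsContRep I α ∧ RepLocallyMaximal I α ∧ BarMatches C I α β := by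
  classical
  intro β hβ
  open IotaSurjAux in
  obtain ⟨hlocmax, hconst⟩ := hcell
  -- choose conjugators, normalized to `1` on the diagonal
  choose! gc0 hgc0 using hβ.compat
  set gc : C.cell → C.cell → G := fun f e => if f = e then 1 else gc0 f e with hgcdef
  have hgcee : ∀ e : C.cell, gc e e = 1 := fun e => if_pos rfl
  have hgc : ∀ f e : C.cell, C.Face f e → ∀ γ ∈ cellGrp C I e,
      β e γ = (gc f e)⁻¹ * β f γ * gc f e := by
    intro f e hfe γ hγ
    by_cases hfeq : f = e
    · subst hfeq
      simp [hgcdef]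
    · simp only [hgcdef, if_neg hfeq]
      exact hgc0 f e hfe γ hγ
  -- slices are the cell groups
  have hslc : ∀ a : A, slice I a = cellGrp C I (C.cellOf a) := fun a =>
    hconst a (C.center (C.cellOf a)) (cellOf_center C (C.cellOf a)).symm
  -- weak local maximality
  have hwlm : ∀ a : A, ∃ U : Set A, IsOpen U ∧ a ∈ U ∧ ∀ u ∈ U, slice I u ⊆ slice I a := by
    intro a
    obtain ⟨U, hUo, haU, -, ρ, -, -, -, hρ1, hsl⟩ := hlocmax a univ Filter.univ_mem
    refine ⟨U, hUo, haU, fun u hu => ?_⟩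
    have h := hsl 1 ⟨zero_le_one, le_refl 1⟩ u hu
    rwa [hρ1 u hu] at h
  have hdim : ∀ a : A, C.dim (C.cellOf a) = 0 ∨ C.dim (C.cellOf a) = 1 := fun a => by
    have := hgraph (C.cellOf a); omega
  -- the local model near a vertex
  have hmodel : ∀ v : C.cell, C.dim v = 0 → ∀ N : Set G, IsOpen N → (1:G) ∈ N →
      ∀ U' : Set A, IsOpen U' → C.center v ∈ U' →
      ∃ V : Set A, IsOpen V ∧ C.center v ∈ V ∧ V ⊆ U' ∧
        ∀ u ∈ V, (u = C.center v ∨ C.dim (C.cellOf u) = 1) ∧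
          (qp C gc (C.cellOf u) (tpar C u) * (gc v (C.cellOf u))⁻¹ ∈ N) ∧
          ∀ γ ∈ slice I u, alph C β gc (γ, u) =
            (qp C gc (C.cellOf u) (tpar C u) * (gc v (C.cellOf u))⁻¹) * β v γ *
              (qp C gc (C.cellOf u) (tpar C u) * (gc v (C.cellOf u))⁻¹)⁻¹ := by
    intro v h0 N hNo h1N U' hU'o hvU'
    obtain ⟨V, hVo, hcV, hVU, hVdesc⟩ := vnbhd C hgraph gc v h0 N hNo h1N U' hU'o hvU'
    refine ⟨V, hVo, hcV, hVU, fun u hu => ?_⟩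
    rcases hVdesc u hu with hueq | ⟨hd1, hface, hq⟩
    · subst hueq
      have h1 : C.cellOf (C.center v) = v := cellOf_center C v
      have h2 : tpar C (C.center v) = 0 := tpar_center C v
      refine ⟨Or.inl rfl, ?_, ?_⟩
      · rw [h1, h2, qp_zero, hgcee v]
        simpa using h1N
      · intro γ hγ
        rw [alph_center, h1, h2, qp_zero, hgcee v]
        simp
    · refine ⟨Or.inr hd1, hq, ?_⟩
      intro γ hγ
      have hγc : γ ∈ cellGrp C I (C.cellOf u) := by rwa [hslc u] at hγ
      rw [alph_eq C β gc γ u _ rfl, hgc v (C.cellOf u) hface γ hγc]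
      group
  refine ⟨alph C β gc, ⟨?_, ?_⟩, ?_, ?_⟩
  · -- continuity on I
    rintro ⟨γ₀, a₀⟩ hpI
    rcases hdim a₀ with h0 | h1
    · -- a₀ lies on a vertex
      have hγ₀ : γ₀ ∈ cellGrp C I (C.cellOf a₀) := by
        have h : γ₀ ∈ slice I a₀ := hpI
        rwa [hslc a₀] at h
      have ha₀ : a₀ = C.center (C.cellOf a₀) := vertex_eq C a₀ _ rfl h0
      have hval : alph C β gc (γ₀, a₀) = β (C.cellOf a₀) γ₀ :=
        alph_vertex C β gc γ₀ a₀ _ rfl h0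
      show Filter.Tendsto (alph C β gc) (nhdsWithin (γ₀, a₀) I) (nhds (alph C β gc (γ₀, a₀)))
      rw [hval, Filter.tendsto_def]
      intro W hW
      have hφ : Continuous (fun p : G × G => p.1 * p.2 * p.1⁻¹) :=
        (continuous_fst.mul continuous_snd).mul continuous_fst.inv
      have h2 : (fun p : G × G => p.1 * p.2 * p.1⁻¹) ⁻¹' W ∈
          nhds ((1 : G), β (C.cellOf a₀) γ₀) :=
        hφ.continuousAt.preimage_mem_nhds (by simpa using hW)
      obtain ⟨N, W', hNo, h1N, hW'o, hbW', hNW⟩ := mem_nhds_prod_iff'.mp h2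
      have hpre : (β (C.cellOf a₀)) ⁻¹' W' ∈ nhdsWithin γ₀ (cellGrp C I (C.cellOf a₀)) :=
        (hβ.hom (C.cellOf a₀)).cont γ₀ hγ₀ (hW'o.mem_nhds hbW')
      obtain ⟨O, hOo, hγO, hOsub⟩ := mem_nhdsWithin.mp hpre
      obtain ⟨Uw, hUwo, haUw, hslw⟩ := hwlm a₀
      obtain ⟨V, hVo, hcV, hVU, hVmod⟩ :=
        hmodel (C.cellOf a₀) h0 N hNo h1N Uw hUwo (ha₀ ▸ haUw)
      refine mem_nhdsWithin.mpr ⟨O ×ˢ V, hOo.prod hVo, ⟨hγO, ha₀ ▸ hcV⟩, ?_⟩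
      rintro ⟨γ, u⟩ ⟨⟨hγ, hu⟩, hpI'⟩
      have hγs : γ ∈ slice I u := hpI'
      have hγv : γ ∈ cellGrp C I (C.cellOf a₀) := by
        have h := hslw u (hVU hu) hγs
        rwa [hslc a₀] at h
      have hβW' : β (C.cellOf a₀) γ ∈ W' := hOsub ⟨hγ, hγv⟩
      have heq := (hVmod u hu).2.2 γ hγs
      show alph C β gc (γ, u) ∈ W
      rw [heq]
      exact hNW (Set.mk_mem_prod ((hVmod u hu).2.1) hβW')
    · -- a₀ lies on an edge
      have hγ₀ : γ₀ ∈ cellGrp C I (C.cellOf a₀) := by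
        have h : γ₀ ∈ slice I a₀ := hpI
        rwa [hslc a₀] at h
      have hΩo : IsOpen ((univ : Set Γ) ×ˢ {b | C.cellOf b = C.cellOf a₀}) :=
        isOpen_univ.prod (isOpen_cellSet C hgraph _ h1)
      have hmt : Set.MapsTo Prod.snd (I ∩ (univ : Set Γ) ×ˢ {b | C.cellOf b = C.cellOf a₀})
          {b | C.cellOf b = C.cellOf a₀} := fun p hp => hp.2.2
      have htc : ContinuousWithinAt (fun p : Γ × A => tpar C p.2)
          (I ∩ (univ : Set Γ) ×ˢ {b | C.cellOf b = C.cellOf a₀}) (γ₀, a₀) :=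
        (tpar_contOn C hgraph _ h1 a₀ rfl).comp (g := tpar C) (f := Prod.snd) (x := (γ₀, a₀)) continuous_snd.continuousWithinAt hmt
      have hqc : ContinuousWithinAt (fun p : Γ × A => qp C gc (C.cellOf a₀) (tpar C p.2))
          (I ∩ (univ : Set Γ) ×ˢ {b | C.cellOf b = C.cellOf a₀}) (γ₀, a₀) :=
        (qp_continuous C gc (C.cellOf a₀)).continuousAt.comp_continuousWithinAt htc
      have hβc : ContinuousWithinAt (fun p : Γ × A => β (C.cellOf a₀) p.1)
          (I ∩ (univ : Set Γ) ×ˢ {b | C.cellOf b = C.cellOf a₀}) (γ₀, a₀) := by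
        refine ((hβ.hom (C.cellOf a₀)).cont γ₀ hγ₀).comp
          continuous_fst.continuousWithinAt ?_
        intro p hp
        have hps : p.1 ∈ slice I p.2 := hp.1
        rwa [hslc p.2, hp.2.2] at hps
      have hfull : ContinuousWithinAt
          (fun p : Γ × A => qp C gc (C.cellOf a₀) (tpar C p.2) * β (C.cellOf a₀) p.1 *
            (qp C gc (C.cellOf a₀) (tpar C p.2))⁻¹)
          (I ∩ (univ : Set Γ) ×ˢ {b | C.cellOf b = C.cellOf a₀}) (γ₀, a₀) :=
        (hqc.mul hβc).mul hqc.inv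
      have hcongr : ContinuousWithinAt (alph C β gc)
          (I ∩ (univ : Set Γ) ×ˢ {b | C.cellOf b = C.cellOf a₀}) (γ₀, a₀) :=
        hfull.congr (fun p hp => alph_eq C β gc p.1 p.2 _ hp.2.2)
          (alph_eq C β gc γ₀ a₀ _ rfl)
      exact (continuousWithinAt_inter (hΩo.mem_nhds (show ((γ₀, a₀) : Γ × A) ∈ (univ : Set Γ) ×ˢ {b | C.cellOf b = C.cellOf a₀} from ⟨trivial, rfl⟩))).mp hcongr
  · -- multiplicativity on slices
    intro a γ hγ δ hδ
    have hγ' : γ ∈ cellGrp C I (C.cellOf a) := by rwa [hslc a] at hγ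
    have hδ' : δ ∈ cellGrp C I (C.cellOf a) := by rwa [hslc a] at hδ
    rw [alph_eq C β gc (γ * δ) a _ rfl, alph_eq C β gc γ a _ rfl,
      alph_eq C β gc δ a _ rfl, (hβ.hom (C.cellOf a)).map_mul γ hγ' δ hδ']
    group
  · -- local maximality of the representation
    intro a
    rcases hdim a with h0 | h1
    · -- vertex case
      have ha : a = C.center (C.cellOf a) := vertex_eq C a _ rfl h0
      obtain ⟨Uw, hUwo, haUw, hslw⟩ := hwlm a
      obtain ⟨V, hVo, hcV, hVU, hVmod⟩ :=
        hmodel (C.cellOf a) h0 univ isOpen_univ (mem_univ 1) Uw hUwo (ha ▸ haUw)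
      refine ⟨V, hVo.mem_nhds (ha ▸ hcV), fun u hu => hslw u (hVU hu),
        fun u => qp C gc (C.cellOf u) (tpar C u) * (gc (C.cellOf a) (C.cellOf u))⁻¹, ?_, ?_⟩
      · -- continuity of the conjugating function
        intro u hu
        rcases (hVmod u hu).1 with hueq | hu1
        · -- at the vertex itself
          subst hueq
          show Filter.Tendsto _ (nhdsWithin (C.center (C.cellOf a)) V) (nhds _)
          have hval : qp C gc (C.cellOf (C.center (C.cellOf a)))
              (tpar C (C.center (C.cellOf a))) *
              (gc (C.cellOf a) (C.cellOf (C.center (C.cellOf a))))⁻¹ = 1 := by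
            rw [cellOf_center, tpar_center, qp_zero, hgcee]
            simp
          rw [show (fun u => qp C gc (C.cellOf u) (tpar C u) *
              (gc (C.cellOf a) (C.cellOf u))⁻¹) (C.center (C.cellOf a)) = 1 from hval,
            Filter.tendsto_def]
          intro s hs
          obtain ⟨N₀, hN₀s, hN₀o, h1N₀⟩ := _root_.mem_nhds_iff.mp hs
          obtain ⟨V', hV'o, hcV', -, hdesc'⟩ :=
            hmodel (C.cellOf a) h0 N₀ hN₀o h1N₀ univ isOpen_univ (mem_univ _)
          refine mem_nhdsWithin.mpr ⟨V', hV'o, hcV', fun w hw => hN₀s ?_⟩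
          exact (hdesc' w hw.1).2.1
        · -- on an open edge
          have hopen : IsOpen {b | C.cellOf b = C.cellOf u} :=
            isOpen_cellSet C hgraph _ hu1
          have hcw : ContinuousWithinAt
              (fun w => qp C gc (C.cellOf u) (tpar C w) * (gc (C.cellOf a) (C.cellOf u))⁻¹)
              (V ∩ {b | C.cellOf b = C.cellOf u}) u :=
            (((qp_continuous C gc (C.cellOf u)).continuousAt.comp_continuousWithinAt
              ((tpar_contOn C hgraph _ hu1 u rfl).mono inter_subset_right)).mul
              continuousWithinAt_const)
          have hcg : ContinuousWithinAt
              (fun w => qp C gc (C.cellOf w) (tpar C w) * (gc (C.cellOf a) (C.cellOf w))⁻¹)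
              (V ∩ {b | C.cellOf b = C.cellOf u}) u := by
            refine hcw.congr (fun w hw => ?_) rfl
            have hwc : C.cellOf w = C.cellOf u := hw.2
            rw [hwc]
          exact (continuousWithinAt_inter (hopen.mem_nhds rfl)).mp hcg
      · -- the conjugation identity
        intro u hu γ hγ
        have heq := (hVmod u hu).2.2 γ hγ
        rw [heq]
        have hva : alph C β gc (γ, a) = β (C.cellOf a) γ :=
          alph_vertex C β gc γ a _ rfl h0
        rw [hva]
    · -- edge case
      refine ⟨{b | C.cellOf b = C.cellOf a},
        (isOpen_cellSet C hgraph _ h1).mem_nhds rfl, ?_,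
        fun u => qp C gc (C.cellOf a) (tpar C u) * (qp C gc (C.cellOf a) (tpar C a))⁻¹,
        ?_, ?_⟩
      · intro u hu
        rw [hslc u, hu, ← hslc a]
      · exact (((qp_continuous C gc (C.cellOf a)).comp_continuousOn
          (tpar_contOn C hgraph _ h1)).mul continuousOn_const)
      · intro u hu γ hγ
        rw [alph_eq C β gc γ u _ hu, alph_eq C β gc γ a _ rfl]
        group
  · -- the cellwise restrictions are the given homomorphisms
    intro e
    refine ⟨1, fun γ _ => ?_⟩
    have h : restrictAt C (alph C β gc) e γ = β e γ := alph_center C β gc γ e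
    rw [h]
    simp
end
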